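/- arXiv:2507.03754 — 7 statements merged into one kernel-verified Lean document; each statement's English description precedes it below -/
import Mathlib

section
/- For any finite graph G = (V,E) and any subgraph T of G which is a forest, ν(G) ≤ |∂T| / |T|, where ∂T ⊂ E is the set of edges connecting vertices of T with vertices of V \ T. -/
open Finset

variable {V : Type*} [Fintype V] {W : Type*} [Fintype W]

open scoped Classical in
noncomputable def magEnergy (G : SimpleGraph V) (σ : V → V → ℂ) (f : V → ℂ) : ℝ :=
  (1/2) * ∑ x : V, ∑ y : V, if G.Adj x y then ‖f x - σ x y * f y‖ ^ 2 else 0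

noncomputable def magDenom (f : V → ℂ) : ℝ := ∑ x : V, ‖f x‖ ^ 2

noncomputable def lambda1 (G : SimpleGraph V) (σ : V → V → ℂ) : ℝ :=
  sInf { r : ℝ | ∃ f : V → ℂ, f ≠ 0 ∧ r = magEnergy G σ f / magDenom f }

def IsMagPotential (G : SimpleGraph V) (σ : V → V → ℂ) : Prop :=
  (∀ x y, G.Adj x y → ‖σ x y‖ = 1) ∧
  (∀ x y, G.Adj x y → σ y x = (σ x y)⁻¹)

noncomputable def magHeight (G : SimpleGraph V) : ℝ :=
  sSup { r : ℝ | ∃ σ : V → V → ℂ, IsMagPotential G σ ∧ r = lambda1 G σ }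

open scoped Classical in
noncomputable def magLap (G : SimpleGraph V) (σ : V → V → ℂ) (f : V → ℂ) : V → ℂ :=
  fun x => ∑ y : V, if G.Adj x y then f x - σ x y * f y else 0

noncomputable def wPhase {α : Type*} (τ : α → α → ℂ) {H : SimpleGraph α} {a b : α}
    (w : H.Walk a b) : ℂ := (w.darts.map fun d => τ d.toProd.1 d.toProd.2).prod

lemma wPhase_nil {α : Type*} (τ : α → α → ℂ) {H : SimpleGraph α} {a : α} :
    wPhase τ (SimpleGraph.Walk.nil : H.Walk a a) = 1 := rfl

lemma wPhase_cons {α : Type*} (τ : α → α → ℂ) {H : SimpleGraph α} {a b c : α}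
    (h : H.Adj a b) (w : H.Walk b c) :
    wPhase τ (SimpleGraph.Walk.cons h w) = τ a b * wPhase τ w := by
  simp [wPhase]

lemma abs_wPhase {α : Type*} {τ : α → α → ℂ} {H : SimpleGraph α}
    (hτ : ∀ x y, H.Adj x y → ‖τ x y‖ = 1) {a b : α} (w : H.Walk a b) :
    ‖wPhase τ w‖ = 1 := by
  induction w with
  | nil => simp [wPhase_nil]
  | cons h w ih => rw [wPhase_cons, norm_mul, hτ _ _ h, ih, one_mul]

lemma wPhase_copy {α : Type*} (τ : α → α → ℂ) {H : SimpleGraph α} {a b a' b' : α}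
    (ha : a = a') (hb : b = b') (w : H.Walk a b) :
    wPhase τ (w.copy ha hb) = wPhase τ w := by
  subst ha; subst hb; rfl

lemma wPhase_transport {α : Type*} (τ : α → α → ℂ) {H : SimpleGraph α} {a b b' : α}
    (h : b = b') (w : H.Walk a b) : wPhase τ (h ▸ w) = wPhase τ w := by
  cases h; rfl

lemma exists_gauge [DecidableEq V] (G : SimpleGraph V) (S : Finset V)
    (hforest : (G.induce (S : Set V)).IsAcyclic)
    (σ : V → V → ℂ) (hσ : IsMagPotential G σ) :
    ∃ f : V → ℂ, (∀ x, x ∉ S → f x = 0) ∧ (∀ x ∈ S, ‖f x‖ = 1) ∧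
      (∀ x ∈ S, ∀ y ∈ S, G.Adj x y → f x = σ x y * f y) := by
  classical
  set H : SimpleGraph (S : Set V) := G.induce (S : Set V) with hH
  let τ : ↥(S : Set V) → ↥(S : Set V) → ℂ := fun a b => σ a b
  have hτabs : ∀ a b : ↥(S : Set V), H.Adj a b → ‖τ a b‖ = 1 := by
    intro a b hab
    exact hσ.1 a b hab
  let root : ↥(S : Set V) → ↥(S : Set V) := fun x => (H.connectedComponentMk x).out
  have hreach : ∀ x, H.Reachable x (root x) :=
    fun x => (SimpleGraph.ConnectedComponent.exact (Quot.out_eq _)).symm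
  let p : ∀ x : ↥(S : Set V), H.Path x (root x) := fun x => (hreach x).some.toPath
  let f : V → ℂ := fun v => if h : v ∈ S then wPhase τ (p ⟨v, by simpa using h⟩).val else 0
  have hfval : ∀ (v : V) (h : v ∈ S), f v = wPhase τ (p ⟨v, by simpa using h⟩).val := by
    intro v h; simp [f, h]
  refine ⟨f, ?_, ?_, ?_⟩
  · intro x hx; simp [f, hx]
  · intro x hx; rw [hfval x hx]; exact abs_wPhase hτabs _
  · intro x hx y hy hxy
    set x' : ↥(S : Set V) := ⟨x, by simpa using hx⟩
    set y' : ↥(S : Set V) := ⟨y, by simpa using hy⟩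
    have hadj : H.Adj x' y' := hxy
    have hroot : root y' = root x' := by
      show (H.connectedComponentMk y').out = (H.connectedComponentMk x').out
      rw [SimpleGraph.ConnectedComponent.connectedComponentMk_eq_of_adj hadj.symm]
    let qw : H.Walk y' (root x') := (p y').val.copy rfl hroot
    have hqpath : qw.IsPath := by
      simpa [qw] using (p y').2
    set q : H.Path y' (root x') := ⟨qw, hqpath⟩ with hqdef
    have hq : wPhase τ q.val = wPhase τ (p y').val := wPhase_copy τ rfl hroot _
    have key : wPhase τ (p x').val = τ x' y' * wPhase τ q.val := by
      by_cases hmem : x' ∈ q.val.support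
      · have htake : (⟨q.val.takeUntil x' hmem, q.2.takeUntil hmem⟩ : H.Path y' x')
            = SimpleGraph.Path.singleton hadj.symm := hforest.path_unique _ _
        have hdrop : (⟨q.val.dropUntil x' hmem, q.2.dropUntil hmem⟩ : H.Path x' (root x'))
            = p x' := hforest.path_unique _ _
        have hspec := q.val.take_spec hmem
        have hqeq : q.val = SimpleGraph.Walk.cons hadj.symm (q.val.dropUntil x' hmem) := by
          conv_lhs => rw [← hspec]
          have h1 : q.val.takeUntil x' hmem = (SimpleGraph.Path.singleton hadj.symm).val :=
            congrArg Subtype.val htake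
          rw [h1]
          rfl
        have hpx : (p x').val = q.val.dropUntil x' hmem := (congrArg Subtype.val hdrop).symm
        have h2 := congrArg (wPhase τ) hqeq
        rw [wPhase_cons, ← hpx] at h2
        have hne : σ x y ≠ 0 := by
          intro h0
          have := hσ.1 x y hxy
          rw [h0] at this; simp at this
        have hyx : τ y' x' = (τ x' y')⁻¹ := hσ.2 x y hxy
        rw [hyx] at h2
        have hne' : τ x' y' ≠ 0 := hne
        field_simp at h2 ⊢
        linear_combination -h2
      · have hcons : (⟨SimpleGraph.Walk.cons hadj q.val, q.2.cons hmem⟩ : H.Path x' (root x'))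
            = p x' := hforest.path_unique _ _
        have h3 := congrArg Subtype.val hcons
        rw [← h3, wPhase_cons]
    rw [hfval x hx, hfval y hy]
    show wPhase τ (p x').val = σ x y * wPhase τ (p y').val
    rw [key, hq]

theorem magHeight_le_forest_isoperimetric [DecidableEq V]
    (G : SimpleGraph V) [DecidableRel G.Adj]
    (S : Finset V) (hS : S.Nonempty)
    (hforest : (G.induce (S : Set V)).IsAcyclic) :
    magHeight G ≤ (∑ x ∈ S, (((univ \ S).filter (G.Adj x)).card : ℝ)) / S.card := by
  classical
  set B : ℝ := (∑ x ∈ S, (((univ \ S).filter (G.Adj x)).card : ℝ)) / S.card with hB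
  have hBnonneg : 0 ≤ B := by
    apply div_nonneg
    · exact Finset.sum_nonneg fun x _ => Nat.cast_nonneg _
    · exact Nat.cast_nonneg _
  apply Real.sSup_le _ hBnonneg
  rintro r ⟨σ, hσ, rfl⟩
  obtain ⟨f, h0, h1, hgauge⟩ := exists_gauge G S hforest σ hσ
  set num : ℝ := ∑ x ∈ S, (((univ \ S).filter (G.Adj x)).card : ℝ) with hnum
  -- energy of f
  have hterm : ∀ (x y : V) (inst : Decidable (G.Adj x y))
      (i1 : Decidable (x ∈ S ∧ y ∉ S ∧ G.Adj x y))
      (i2 : Decidable (y ∈ S ∧ x ∉ S ∧ G.Adj x y)),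
      (@ite ℝ (G.Adj x y) inst (‖f x - σ x y * f y‖ ^ 2) 0) =
      (@ite ℝ (x ∈ S ∧ y ∉ S ∧ G.Adj x y) i1 (1:ℝ) 0)
      + (@ite ℝ (y ∈ S ∧ x ∉ S ∧ G.Adj x y) i2 (1:ℝ) 0) := by
    intro x y inst i1 i2
    by_cases hadj : G.Adj x y
    · by_cases hx : x ∈ S
      · by_cases hy : y ∈ S
        · have := hgauge x hx y hy hadj
          simp [hadj, hx, hy, this]
        · simp [hadj, hx, hy, h0 y hy, h1 x hx]
      · by_cases hy : y ∈ S
        · have habs : ‖f x - σ x y * f y‖ = 1 := by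
            rw [h0 x hx, zero_sub, norm_neg, norm_mul, hσ.1 x y hadj, h1 y hy, one_mul]
          simp [hadj, hx, hy, habs]
        · simp [hadj, hx, hy, h0 x hx, h0 y hy]
    · simp [hadj]
  have hcross : ∀ (x : V), (∑ y : V, if x ∈ S ∧ y ∉ S ∧ G.Adj x y then (1:ℝ) else 0)
      = if x ∈ S then (((univ \ S).filter (G.Adj x)).card : ℝ) else 0 := by
    intro x
    by_cases hx : x ∈ S
    · simp only [hx, true_and, if_true]
      rw [Finset.card_filter]
      push_cast
      rw [show (univ \ S) = univ.filter (· ∉ S) from by ext y; simp,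
        Finset.sum_filter]
      refine Finset.sum_congr rfl fun y _ => ?_
      by_cases hy : y ∈ S <;> by_cases ha : G.Adj x y <;> simp [hy, ha]
    · simp [hx]
  have h4 : (∑ x : V, ∑ y : V, (if x ∈ S ∧ y ∉ S ∧ G.Adj x y then (1:ℝ) else 0)) = num := by
    rw [Finset.sum_congr rfl fun x _ => hcross x, Finset.sum_ite_mem]
    simp [hnum]
  have hsum2 : (∑ x : V, ∑ y : V, (if y ∈ S ∧ x ∉ S ∧ G.Adj x y then (1:ℝ) else 0))
      = ∑ x : V, ∑ y : V, (if x ∈ S ∧ y ∉ S ∧ G.Adj x y then (1:ℝ) else 0) := by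
    rw [Finset.sum_comm]
    refine Finset.sum_congr rfl fun y _ => Finset.sum_congr rfl fun x _ => ?_
    simp only [show G.Adj x y ↔ G.Adj y x from G.adj_comm x y]
  have hEnergy : magEnergy G σ f = num := by
    rw [magEnergy]
    have hin : (∑ x : V, ∑ y : V, @ite ℝ (G.Adj x y) (Classical.propDecidable _)
        (‖f x - σ x y * f y‖ ^ 2) 0) = 2 * num := by
      calc (∑ x : V, ∑ y : V, @ite ℝ (G.Adj x y) (Classical.propDecidable _)
          (‖f x - σ x y * f y‖ ^ 2) 0)
          = (∑ x : V, ∑ y : V, ((if x ∈ S ∧ y ∉ S ∧ G.Adj x y then (1:ℝ) else 0)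
            + (if y ∈ S ∧ x ∉ S ∧ G.Adj x y then (1:ℝ) else 0))) :=
            Finset.sum_congr rfl fun x _ => Finset.sum_congr rfl fun y _ => hterm x y _ _ _
        _ = (∑ x : V, ∑ y : V, (if x ∈ S ∧ y ∉ S ∧ G.Adj x y then (1:ℝ) else 0))
            + (∑ x : V, ∑ y : V, (if y ∈ S ∧ x ∉ S ∧ G.Adj x y then (1:ℝ) else 0)) := by
            rw [← Finset.sum_add_distrib]
            exact Finset.sum_congr rfl fun x _ => Finset.sum_add_distrib
        _ = 2 * num := by rw [hsum2, h4]; ring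
    rw [hin]; ring
  have hDenom : magDenom f = (S.card : ℝ) := by
    rw [magDenom]
    calc (∑ x : V, ‖f x‖ ^ 2) = ∑ x : V, if x ∈ S then (1:ℝ) else 0 := by
          refine Finset.sum_congr rfl fun x _ => ?_
          by_cases hx : x ∈ S
          · simp [hx, h1 x hx]
          · simp [hx, h0 x hx]
      _ = (S.card : ℝ) := by rw [Finset.sum_ite_mem]; simp
  -- f is nonzero
  obtain ⟨x₀, hx₀⟩ := hS
  have hfne : f ≠ 0 := by
    intro hf
    have := h1 x₀ hx₀
    rw [hf] at this
    simp at this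
  have hmem : B ∈ { r : ℝ | ∃ f : V → ℂ, f ≠ 0 ∧ r = magEnergy G σ f / magDenom f } :=
    ⟨f, hfne, by rw [hEnergy, hDenom]⟩
  have hbdd : BddBelow { r : ℝ | ∃ f : V → ℂ, f ≠ 0 ∧ r = magEnergy G σ f / magDenom f } := by
    refine ⟨0, ?_⟩
    rintro r ⟨g, -, rfl⟩
    apply div_nonneg
    · rw [magEnergy]
      apply mul_nonneg (by norm_num)
      apply Finset.sum_nonneg fun x _ => Finset.sum_nonneg fun y _ => ?_
      positivity
    · rw [magDenom]
      exact Finset.sum_nonneg fun x _ => by positivity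
  exact csInf_le hbdd hmem
end

section
/- For any finite graph G = (V,E), ν(G) ≤ min_{x∼y} (d_x + d_y)/2 − 1, where the minimum runs over all edges {x,y} ∈ E and d_x denotes the degree of the vertex x. -/
open Finset

variable {V : Type*} [Fintype V] {W : Type*} [Fintype W]

lemma magEnergy_nonneg (G : SimpleGraph V) (σ : V → V → ℂ) (f : V → ℂ) :
    0 ≤ magEnergy G σ f := by
  unfold magEnergy
  apply mul_nonneg (by norm_num)
  apply Finset.sum_nonneg; intro u _
  apply Finset.sum_nonneg; intro v _
  split <;> positivity

lemma magDenom_nonneg (f : V → ℂ) : 0 ≤ magDenom f := by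
  unfold magDenom
  apply Finset.sum_nonneg; intro u _; positivity

open scoped Classical in
lemma lambda1_le_bound (G : SimpleGraph V) [DecidableRel G.Adj]
    (x y : V) (hxy : G.Adj x y) (σ : V → V → ℂ) (hσ : IsMagPotential G σ) :
    lambda1 G σ ≤ ((G.degree x : ℝ) + G.degree y) / 2 - 1 := by
  obtain ⟨hσ1, hσ2⟩ := hσ
  have hne : x ≠ y := hxy.ne
  set f : V → ℂ := fun v => if v = x then 1 else if v = y then (σ x y)⁻¹ else 0 with hf
  have hfx : f x = 1 := by simp [hf]
  have hfy : f y = (σ x y)⁻¹ := by simp [hf, hne.symm]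
  have hfo : ∀ v, v ≠ x → v ≠ y → f v = 0 := by intro v h1 h2; simp [hf, h1, h2]
  have habs : ‖σ x y‖ = 1 := hσ1 x y hxy
  have hnz : σ x y ≠ 0 := by intro h; simp [h] at habs
  have hdx : 1 ≤ G.degree x := by
    rw [Nat.one_le_iff_ne_zero, ← Nat.pos_iff_ne_zero, G.degree_pos_iff_exists_adj]
    exact ⟨y, hxy⟩
  have hdy : 1 ≤ G.degree y := by
    rw [Nat.one_le_iff_ne_zero, ← Nat.pos_iff_ne_zero, G.degree_pos_iff_exists_adj]
    exact ⟨x, hxy.symm⟩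
  -- denominator
  have hden : magDenom f = 2 := by
    unfold magDenom
    rw [Finset.sum_eq_add x y hne
      (fun c _ hc => by rw [hfo c hc.1 hc.2]; simp)
      (fun h => absurd (Finset.mem_univ x) h)
      (fun h => absurd (Finset.mem_univ y) h)]
    rw [hfx, hfy]
    simp [habs]
    norm_num
  -- row sums
  have count1 : ∀ z w : V, G.Adj z w →
      (∑ v : V, if G.Adj z v ∧ v ≠ w then (1:ℝ) else 0) = (G.degree z : ℝ) - 1 := by
    intro z w hzw
    rw [Finset.sum_boole]
    have : Finset.filter (fun v => G.Adj z v ∧ v ≠ w) Finset.univ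
        = (G.neighborFinset z).erase w := by
      ext v
      simp [SimpleGraph.mem_neighborFinset, Finset.mem_erase, and_comm]
    rw [this, Finset.card_erase_of_mem (by simpa [SimpleGraph.mem_neighborFinset] using hzw),
      SimpleGraph.card_neighborFinset_eq_degree]
    have h1 : 1 ≤ G.degree z := by
      rw [Nat.one_le_iff_ne_zero, ← Nat.pos_iff_ne_zero, G.degree_pos_iff_exists_adj]
      exact ⟨w, hzw⟩
    push_cast [Nat.cast_sub h1]
    ring
  have hrowx : (∑ v : V, if G.Adj x v then ‖f x - σ x v * f v‖ ^ 2 else 0)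
      = (G.degree x : ℝ) - 1 := by
    rw [← count1 x y hxy]
    apply Finset.sum_congr rfl
    intro v _
    by_cases h : G.Adj x v
    · by_cases hv : v = y
      · subst hv
        simp [h, hfx, hfy, mul_inv_cancel₀ hnz]
      · have hvx : v ≠ x := fun e => G.loopless.irrefl x (e ▸ h)
        simp [h, hv, hfx, hfo v hvx hv]
    · simp [h]
  have hrowy : (∑ v : V, if G.Adj y v then ‖f y - σ y v * f v‖ ^ 2 else 0)
      = (G.degree y : ℝ) - 1 := by
    rw [← count1 y x hxy.symm]
    apply Finset.sum_congr rfl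
    intro v _
    by_cases h : G.Adj y v
    · by_cases hv : v = x
      · rw [if_pos h, if_neg (fun hc => hc.2 hv), hv, hfx, hσ2 x y hxy, hfy]
        simp
      · have hvy : v ≠ y := fun e => G.loopless.irrefl y (e ▸ h)
        rw [if_pos h, if_pos ⟨h, hv⟩, hfy, hfo v hv hvy]
        simp [habs]
    · simp [h]
  -- other rows
  have hrowu : ∀ u : V, u ≠ x → u ≠ y →
      (∑ v : V, if G.Adj u v then ‖f u - σ u v * f v‖ ^ 2 else 0)
      = (if G.Adj u x then (1:ℝ) else 0) + (if G.Adj u y then (1:ℝ) else 0) := by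
    intro u hux huy
    have hterm : ∀ v : V, (if G.Adj u v then ‖f u - σ u v * f v‖ ^ 2 else 0)
        = (if G.Adj u v ∧ v = x then (1:ℝ) else 0) + (if G.Adj u v ∧ v = y then (1:ℝ) else 0) := by
      intro v
      by_cases h : G.Adj u v
      · by_cases hv : v = x
        · have h' : G.Adj u x := hv ▸ h
          simp [h, hv, hne, hfo u hux huy, hfx, map_mul, hσ1 u x h']
        · by_cases hv' : v = y
          · rw [if_pos h, if_neg (fun hc => hv hc.2), if_pos ⟨h, hv'⟩, hfo u hux huy, hv', hfy]
            simp [map_mul, hσ1 u y (hv' ▸ h), habs]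
          · simp [h, hv, hv', hfo u hux huy, hfo v hv hv']
      · simp [h]
    have hsingle : ∀ w : V, (∑ v : V, if G.Adj u v ∧ v = w then (1:ℝ) else 0)
        = if G.Adj u w then (1:ℝ) else 0 := by
      intro w
      rw [Finset.sum_eq_single w (fun b _ hb => by simp [hb]) (fun h => absurd (Finset.mem_univ w) h)]
      simp
    rw [Finset.sum_congr rfl (fun v _ => hterm v), Finset.sum_add_distrib, hsingle, hsingle]
  -- column counts
  have count2 : ∀ z w : V, G.Adj z w →
      (∑ u ∈ (Finset.univ.erase z).erase w, if G.Adj u z then (1:ℝ) else 0)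
        = (G.degree z : ℝ) - 1 := by
    intro z w hzw
    rw [Finset.sum_boole]
    have : Finset.filter (fun u => G.Adj u z) ((Finset.univ.erase z).erase w)
        = (G.neighborFinset z).erase w := by
      ext u
      simp only [Finset.mem_filter, Finset.mem_erase, Finset.mem_univ, and_true,
        SimpleGraph.mem_neighborFinset]
      constructor
      · rintro ⟨⟨h1, h2⟩, h3⟩; exact ⟨h1, h3.symm⟩
      · rintro ⟨h1, h2⟩; exact ⟨⟨h1, fun e => G.loopless.irrefl z (e ▸ h2.symm)⟩, h2.symm⟩
    rw [this, Finset.card_erase_of_mem (by simpa [SimpleGraph.mem_neighborFinset] using hzw),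
      SimpleGraph.card_neighborFinset_eq_degree]
    have h1 : 1 ≤ G.degree z := by
      rw [Nat.one_le_iff_ne_zero, ← Nat.pos_iff_ne_zero, G.degree_pos_iff_exists_adj]
      exact ⟨w, hzw⟩
    push_cast [Nat.cast_sub h1]
    ring
  -- energy
  have hen : magEnergy G σ f = (G.degree x : ℝ) + G.degree y - 2 := by
    have hE : magEnergy G σ f = (1/2) * ∑ u : V, ∑ v : V,
        if G.Adj u v then ‖f u - σ u v * f v‖ ^ 2 else 0 := by
      unfold magEnergy
      congr 1
      exact Finset.sum_congr rfl fun u _ => Finset.sum_congr rfl fun v _ => by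
        by_cases h : G.Adj u v <;> simp [h]
    rw [hE]
    have hyu : y ∈ Finset.univ.erase x := by simp [hne.symm]
    rw [← Finset.add_sum_erase _ _ (Finset.mem_univ x), ← Finset.add_sum_erase _ _ hyu,
      hrowx, hrowy]
    have : ∑ u ∈ (Finset.univ.erase x).erase y,
        (∑ v : V, if G.Adj u v then ‖f u - σ u v * f v‖ ^ 2 else 0)
        = ((G.degree x : ℝ) - 1) + ((G.degree y : ℝ) - 1) := by
      rw [Finset.sum_congr rfl (fun u hu => by
        simp only [Finset.mem_erase] at hu
        exact hrowu u hu.2.1 hu.1), Finset.sum_add_distrib]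
      rw [count2 x y hxy]
      congr 1
      rw [Finset.erase_right_comm, count2 y x hxy.symm]
    rw [this]
    ring
  -- conclude
  have hmem : ((G.degree x : ℝ) + G.degree y) / 2 - 1
      ∈ { r : ℝ | ∃ f : V → ℂ, f ≠ 0 ∧ r = magEnergy G σ f / magDenom f } := by
    refine ⟨f, ?_, ?_⟩
    · intro h
      have := congrFun h x
      rw [hfx] at this
      simp at this
    · rw [hen, hden]; ring
  apply csInf_le _ hmem
  refine ⟨0, ?_⟩
  rintro r ⟨g, _, rfl⟩
  exact div_nonneg (magEnergy_nonneg G σ g) (magDenom_nonneg g)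

theorem magHeight_le_min_degree_bound (G : SimpleGraph V) [DecidableRel G.Adj]
    (x y : V) (hxy : G.Adj x y) :
    magHeight G ≤ ((G.degree x : ℝ) + G.degree y) / 2 - 1 := by
  have hdx : 1 ≤ G.degree x := by
    rw [Nat.one_le_iff_ne_zero, ← Nat.pos_iff_ne_zero, G.degree_pos_iff_exists_adj]
    exact ⟨y, hxy⟩
  have hdy : 1 ≤ G.degree y := by
    rw [Nat.one_le_iff_ne_zero, ← Nat.pos_iff_ne_zero, G.degree_pos_iff_exists_adj]
    exact ⟨x, hxy.symm⟩
  apply Real.sSup_le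
  · rintro r ⟨σ, hσ, rfl⟩
    exact lambda1_le_bound G x y hxy σ hσ
  · have h1 : (1:ℝ) ≤ G.degree x := by exact_mod_cast hdx
    have h2 : (1:ℝ) ≤ G.degree y := by exact_mod_cast hdy
    linarith
end

section
/- The magneto-spectral height of the complete graph K_d (d ≥ 2) equals d − 2, i.e., ν(K_d) = d − 2, and the supremum is attained by the anti-balanced signature σ̄ ≡ −1. -/
open Finset

variable {V : Type*} [Fintype V] {W : Type*} [Fintype W]

lemma magDenom_eq (f : V → ℂ) : magDenom f = ∑ x : V, Complex.normSq (f x) := by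
  simp [magDenom, Complex.sq_norm]

lemma magEnergy_anti (f : V → ℂ) :
    magEnergy (⊤ : SimpleGraph V) (fun _ _ => -1) f
      = ((Fintype.card V : ℝ) - 2) * magDenom f + Complex.normSq (∑ x, f x) := by
  classical
  have key : ∀ x y : V, (if (⊤ : SimpleGraph V).Adj x y then
        ‖f x - (-1) * f y‖ ^ 2 else 0)
      = Complex.normSq (f x + f y) - (if x = y then 4 * Complex.normSq (f x) else 0) := by
    intro x y
    by_cases h : x = y
    · subst h
      simp [← two_mul, Complex.normSq_mul, Complex.normSq_ofNat]
      ring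
    · simp [SimpleGraph.top_adj, h, Complex.sq_norm, sub_neg_eq_add, neg_one_mul]
  have hsum1 : ∑ x : V, ∑ y : V, Complex.normSq (f x + f y)
      = (Fintype.card V : ℝ) * magDenom f + (Fintype.card V : ℝ) * magDenom f
        + 2 * Complex.normSq (∑ x, f x) := by
    have hre : ∑ x : V, ∑ y : V, (f x * (starRingEnd ℂ) (f y)).re
        = Complex.normSq (∑ x, f x) := by
      have : ∑ x : V, ∑ y : V, (f x * (starRingEnd ℂ) (f y)).re
          = ((∑ x : V, f x) * (starRingEnd ℂ) (∑ y : V, f y)).re := by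
        rw [Finset.sum_mul]
        rw [Complex.re_sum]
        refine Finset.sum_congr rfl fun x _ => ?_
        rw [map_sum, Finset.mul_sum, Complex.re_sum]
      rw [this, Complex.mul_conj, Complex.ofReal_re]
    simp only [Complex.normSq_add, Finset.sum_add_distrib, Finset.sum_const,
      Finset.card_univ, nsmul_eq_mul, magDenom_eq, ← Finset.sum_mul, Finset.mul_sum]
    rw [← hre, Finset.mul_sum]
    congr 1
    simp [Finset.mul_sum]
  have hsum2 : ∑ x : V, ∑ y : V, (if x = y then 4 * Complex.normSq (f x) else 0)
      = 4 * magDenom f := by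
    simp [Finset.sum_ite_eq, magDenom_eq, Finset.mul_sum]
  unfold magEnergy
  simp only [key, Finset.sum_sub_distrib, hsum1, hsum2]
  ring

lemma magDenom_pos {f : V → ℂ} (hf : f ≠ 0) : 0 < magDenom f := by
  obtain ⟨x, hx⟩ := Function.ne_iff.mp hf
  rw [magDenom_eq]
  refine Finset.sum_pos' (fun y _ => Complex.normSq_nonneg _) ⟨x, Finset.mem_univ x, ?_⟩
  exact Complex.normSq_pos.mpr hx

lemma lambda1_anti {u v : V} (huv : u ≠ v) :
    lambda1 (⊤ : SimpleGraph V) (fun _ _ => -1) = (Fintype.card V : ℝ) - 2 := by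
  classical
  set f : V → ℂ := fun x => (if x = u then 1 else 0) - (if x = v then 1 else 0) with hfdef
  have hfne : f ≠ 0 := by
    intro h
    have : f u = 0 := by rw [h]; rfl
    simp [hfdef, huv] at this
  have hsumf : ∑ x : V, f x = 0 := by
    simp [hfdef, Finset.sum_sub_distrib]
  have hD : magDenom f = 2 := by
    have : ∀ x : V, Complex.normSq (f x)
        = (if x = u then 1 else 0) + (if x = v then 1 else 0) := by
      intro x
      by_cases hxu : x = u <;> by_cases hxv : x = v
      · exact absurd (hxu.symm.trans hxv) huv
      · simp [hfdef, hxu, hxv, huv, Ne.symm huv]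
      · simp [hfdef, hxu, hxv, huv, Ne.symm huv]
      · simp [hfdef, hxu, hxv]
    rw [magDenom_eq]
    simp only [this, Finset.sum_add_distrib, Finset.sum_ite_eq', Finset.mem_univ, if_true]
    norm_num
  have hmem : ((Fintype.card V : ℝ) - 2) ∈
      { r : ℝ | ∃ g : V → ℂ, g ≠ 0 ∧ r = magEnergy (⊤ : SimpleGraph V) (fun _ _ => -1) g / magDenom g } := by
    refine ⟨f, hfne, ?_⟩
    rw [magEnergy_anti, hsumf, hD]
    norm_num
  rw [lambda1]
  refine le_antisymm (csInf_le ⟨0, ?_⟩ hmem) (le_csInf ⟨_, hmem⟩ ?_)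
  · rintro r ⟨g, hg, rfl⟩
    exact div_nonneg (magEnergy_nonneg _ _ _) (magDenom_pos hg).le
  · rintro r ⟨g, hg, rfl⟩
    have hDg := magDenom_pos hg
    rw [le_div_iff₀ hDg, magEnergy_anti]
    nlinarith [Complex.normSq_nonneg (∑ x, g x)]

lemma lambda1_le_of_magPotential {u v : V} (huv : u ≠ v) {σ : V → V → ℂ}
    (hσ : IsMagPotential (⊤ : SimpleGraph V) σ) :
    lambda1 (⊤ : SimpleGraph V) σ ≤ (Fintype.card V : ℝ) - 2 := by
  classical
  haveI : Nontrivial V := ⟨u, v, huv⟩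
  have h2 : 2 ≤ Fintype.card V := Fintype.one_lt_card
  have hn : ∀ x y : V, x ≠ y → Complex.normSq (σ x y) = 1 := by
    intro x y h
    rw [← Complex.sq_norm, hσ.1 x y (by simpa using h)]
    norm_num
  have hσne : σ u v ≠ 0 := by
    intro h
    have := hn u v huv
    rw [h] at this
    simp at this
  have hvu : σ v u * σ u v = 1 := by
    rw [hσ.2 u v (by simpa using huv)]
    exact inv_mul_cancel₀ hσne
  set f : V → ℂ := fun x => if x = u then σ u v else if x = v then 1 else 0 with hfdef
  have hfne : f ≠ 0 := by
    intro h
    have : f v = 0 := by rw [h]; rfl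
    simp [hfdef, Ne.symm huv] at this
  have hD : magDenom f = 2 := by
    have hpt : ∀ x : V, Complex.normSq (f x)
        = (if x = u then 1 else 0) + (if x = v then 1 else 0) := by
      intro x
      by_cases hxu : x = u <;> by_cases hxv : x = v
      · exact absurd (hxu.symm.trans hxv) huv
      · simp [hfdef, hxu, hxv, huv, Ne.symm huv, hn u v huv]
      · simp [hfdef, hxu, hxv, huv, Ne.symm huv]
      · simp [hfdef, hxu, hxv]
    rw [magDenom_eq]
    simp only [hpt, Finset.sum_add_distrib, Finset.sum_ite_eq', Finset.mem_univ, if_true]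
    norm_num
  have key : ∀ x y : V, (@ite ℝ ((⊤ : SimpleGraph V).Adj x y) (Classical.propDecidable _) (‖f x - σ x y * f y‖ ^ 2) 0)
      = (if (x = u ∨ x = v) ∧ ¬(y = u ∨ y = v) then 1 else 0)
        + (if (y = u ∨ y = v) ∧ ¬(x = u ∨ x = v) then 1 else 0) := by
    intro x y
    simp only [SimpleGraph.top_adj, Complex.sq_norm]
    by_cases hxu : x = u <;> by_cases hxv : x = v <;>
      by_cases hyu : y = u <;> by_cases hyv : y = v
    · exact absurd (hxu.symm.trans hxv) huv
    · exact absurd (hxu.symm.trans hxv) huv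
    · exact absurd (hxu.symm.trans hxv) huv
    · exact absurd (hxu.symm.trans hxv) huv
    · exact absurd (hyu.symm.trans hyv) huv
    · simp [hfdef, hxu, hyu]
    · simp [hfdef, hxu, hyv, huv, Ne.symm huv]
    · simp [hfdef, hxu, hyu, hyv, Ne.symm hyu, hn u v huv]
    · exact absurd (hyu.symm.trans hyv) huv
    · simp [hfdef, hxv, hxu, hyu, huv, Ne.symm huv, hvu]
    · simp [hfdef, hxv, hyv]
    · simp [hfdef, hxv, hxu, hyu, hyv, Ne.symm hyv, Ne.symm huv]
    · exact absurd (hyu.symm.trans hyv) huv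
    · simp [hfdef, hxu, hxv, hyu, Complex.normSq_mul, hn x u hxu, hn u v huv]
    · simp [hfdef, hxu, hxv, hyv, Complex.normSq_mul, hn x v hxv, Ne.symm huv]
    · by_cases hxy : x = y <;> simp [hfdef, hxu, hxv, hyu, hyv, hxy]
  have cnt : ∑ y : V, (if ¬(y = u ∨ y = v) then (1:ℝ) else 0)
      = (Fintype.card V : ℝ) - 2 := by
    rw [Finset.sum_boole]
    have hfil : Finset.univ.filter (fun y : V => y = u ∨ y = v) = {u, v} := by
      ext y; simp
    have hpos : (Finset.univ.filter (fun y : V => y = u ∨ y = v)).card = 2 := by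
      rw [hfil]; simp [huv]
    have := Finset.card_filter_add_card_filter_not
      (s := (Finset.univ : Finset V)) (p := fun y : V => y = u ∨ y = v)
    rw [hpos, Finset.card_univ] at this
    have : (Finset.univ.filter (fun y : V => ¬(y = u ∨ y = v))).card
        = Fintype.card V - 2 := by omega
    rw [this]
    push_cast [Nat.cast_sub h2]
    ring
  have cnt2 : ∑ y : V, (if (y = u ∨ y = v) then (1:ℝ) else 0) = 2 := by
    rw [Finset.sum_boole]
    have hfil : Finset.univ.filter (fun y : V => y = u ∨ y = v) = {u, v} := by
      ext y; simp
    rw [hfil]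
    simp [huv]
  have hE : magEnergy (⊤ : SimpleGraph V) σ f = 2 * ((Fintype.card V : ℝ) - 2) := by
    rw [magEnergy]
    refine Eq.trans (congrArg (fun t => (1/2 : ℝ) * t)
      (Finset.sum_congr rfl fun x _ => Finset.sum_congr rfl fun y _ => key x y)) ?_
    simp only [Finset.sum_add_distrib]
    have e1 : ∑ x : V, ∑ y : V, (if (x = u ∨ x = v) ∧ ¬(y = u ∨ y = v) then (1:ℝ) else 0)
        = 2 * ((Fintype.card V : ℝ) - 2) := by
      have : ∀ x : V, ∑ y : V, (if (x = u ∨ x = v) ∧ ¬(y = u ∨ y = v) then (1:ℝ) else 0)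
          = (if (x = u ∨ x = v) then (1:ℝ) else 0) * ((Fintype.card V : ℝ) - 2) := by
        intro x
        by_cases hx : x = u ∨ x = v
        · simp only [hx, true_and, if_true, one_mul]; exact cnt
        · simp [hx]
      simp only [this, ← Finset.sum_mul, cnt2]
    have e2 : ∑ x : V, ∑ y : V, (if (y = u ∨ y = v) ∧ ¬(x = u ∨ x = v) then (1:ℝ) else 0)
        = ((Fintype.card V : ℝ) - 2) * 2 := by
      have : ∀ x : V, ∑ y : V, (if (y = u ∨ y = v) ∧ ¬(x = u ∨ x = v) then (1:ℝ) else 0)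
          = (if ¬(x = u ∨ x = v) then (1:ℝ) else 0) * 2 := by
        intro x
        by_cases hx : x = u ∨ x = v
        · simp [hx]
        · simp only [hx, not_false_iff, if_true, one_mul, and_true]; exact cnt2
      simp only [this, ← Finset.sum_mul, cnt]
    rw [e1, e2]
    ring
  rw [lambda1]
  refine csInf_le ⟨0, ?_⟩ ⟨f, hfne, ?_⟩
  · rintro r ⟨g, hg, rfl⟩
    exact div_nonneg (magEnergy_nonneg _ _ _) (magDenom_pos hg).le
  · rw [hE, hD]
    ring

theorem magHeight_complete (d : ℕ) (hd : 2 ≤ d) :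
    magHeight (⊤ : SimpleGraph (Fin d)) = (d : ℝ) - 2 ∧
    lambda1 (⊤ : SimpleGraph (Fin d)) (fun _ _ => -1) = (d : ℝ) - 2 := by
  haveI : NeZero d := ⟨by omega⟩
  have h01 : (0 : Fin d) ≠ 1 := by
    refine Fin.ne_of_val_ne ?_
    simp [Fin.val_one']
    omega
  have hanti : lambda1 (⊤ : SimpleGraph (Fin d)) (fun _ _ => -1) = (d : ℝ) - 2 := by
    have := lambda1_anti h01
    rwa [Fintype.card_fin] at this
  have hpot : IsMagPotential (⊤ : SimpleGraph (Fin d)) (fun _ _ => (-1 : ℂ)) :=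
    ⟨fun x y _ => by simp, fun x y _ => by norm_num⟩
  have hbound : ∀ r ∈ { r : ℝ | ∃ σ : Fin d → Fin d → ℂ,
      IsMagPotential (⊤ : SimpleGraph (Fin d)) σ ∧ r = lambda1 (⊤ : SimpleGraph (Fin d)) σ },
      r ≤ (d : ℝ) - 2 := by
    rintro r ⟨σ, hσ, rfl⟩
    have := lambda1_le_of_magPotential h01 hσ
    rwa [Fintype.card_fin] at this
  have hmem : ((d : ℝ) - 2) ∈ { r : ℝ | ∃ σ : Fin d → Fin d → ℂ,
      IsMagPotential (⊤ : SimpleGraph (Fin d)) σ ∧ r = lambda1 (⊤ : SimpleGraph (Fin d)) σ } :=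
    ⟨fun _ _ => -1, hpot, hanti.symm⟩
  refine ⟨le_antisymm (csSup_le ⟨_, hmem⟩ hbound) (le_csSup ⟨(d : ℝ) - 2, hbound⟩ hmem), hanti⟩
end

section
/- Let G = (V,E) be a finite graph with an edge {x,y} such that ν(G) = (d_x + d_y)/2 − 1. Then every neighbour of x other than y is a neighbour of y and vice versa, i.e., S₁(x) \ {y} = S₁(y) \ {x}; in particular d_x = d_y. -/
open Finset

variable {V : Type*} [Fintype V] {W : Type*} [Fintype W]

lemma lambda1_le (G : SimpleGraph V) (σ : V → V → ℂ) (f : V → ℂ) (hf : f ≠ 0) :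
    lambda1 G σ ≤ magEnergy G σ f / magDenom f := by
  apply csInf_le
  · exact ⟨0, fun r ⟨g, hg, hr⟩ => hr ▸ div_nonneg (magEnergy_nonneg G σ g) (magDenom_nonneg g)⟩
  · exact ⟨f, hf, rfl⟩

set_option maxHeartbeats 2000000 in
lemma key_step (G : SimpleGraph V) [DecidableRel G.Adj] (σ : V → V → ℂ)
    (hσ : IsMagPotential G σ) (x y z : V) (hxy : G.Adj x y) (hxz : G.Adj x z)
    (hyz : ¬ G.Adj y z) (hzy : z ≠ y) :
    lambda1 G σ < ((G.degree x : ℝ) + G.degree y) / 2 - 1 := by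
  classical
  obtain ⟨hσ1, hσ2⟩ := hσ
  have hxyne : x ≠ y := hxy.ne
  have hzx : z ≠ x := hxz.ne'
  have hσxy : σ x y ≠ 0 := by
    intro h0; have := hσ1 x y hxy; rw [h0] at this; simp at this
  have hσxz : σ x z ≠ 0 := by
    intro h0; have := hσ1 x z hxz; rw [h0] at this; simp at this
  set dz : ℕ := G.degree z with hdz
  set ε : ℝ := 1 / ((dz : ℝ) + 1) with hε
  have hε0 : 0 < ε := by positivity
  have hε1 : ε ≤ 1 := by
    rw [hε, div_le_one (by positivity)]; linarith [Nat.cast_nonneg (α := ℝ) dz]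
  set f : V → ℂ := fun w =>
    if w = x then 1 else if w = y then (σ x y)⁻¹
    else if w = z then (ε : ℂ) * (σ x z)⁻¹ else 0 with hfdef
  have hfx : f x = 1 := by simp [hfdef]
  have hfy : f y = (σ x y)⁻¹ := by simp [hfdef, hxyne.symm]
  have hfz : f z = (ε : ℂ) * (σ x z)⁻¹ := by simp [hfdef, hzx, hzy]
  have hf0 : ∀ w : V, w ≠ x → w ≠ y → w ≠ z → f w = 0 := by
    intro w h1 h2 h3; simp [hfdef, h1, h2, h3]
  have hfne : f ≠ 0 := by
    intro h0
    have := congrFun h0 x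
    rw [hfx] at this
    exact one_ne_zero this
  -- abbreviation for the energy summand
  set t : V → V → ℝ := fun u v =>
    if G.Adj u v then ‖f u - σ u v * f v‖ ^ 2 else 0 with ht
  have hEt : magEnergy G σ f = (1/2) * ∑ u : V, ∑ v : V, t u v := by
    unfold magEnergy
    congr 1
    refine Finset.sum_congr rfl fun u _ => Finset.sum_congr rfl fun v _ => ?_
    by_cases h : G.Adj u v <;> simp [ht, h]
  have hrow : ∀ u : V, ∑ v : V, t u v
      = ∑ v ∈ G.neighborFinset u, ‖f u - σ u v * f v‖ ^ 2 := by
    intro u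
    rw [SimpleGraph.neighborFinset_eq_filter, Finset.sum_filter]
  -- membership facts
  have hyNx : y ∈ G.neighborFinset x := by simpa using hxy
  have hzNx : z ∈ (G.neighborFinset x).erase y := by
    simp [Finset.mem_erase, hzy, hxz]
  have hxNy : x ∈ G.neighborFinset y := by simpa using hxy.symm
  have hxNz : x ∈ G.neighborFinset z := by simpa using hxz.symm
  -- degree facts
  have hdx2 : 2 ≤ G.degree x := by
    have hsub : ({y, z} : Finset V) ⊆ G.neighborFinset x := by
      intro w hw
      rcases Finset.mem_insert.1 hw with rfl | hw
      · exact hyNx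
      · rw [Finset.mem_singleton.1 hw]; simpa using hxz
    calc 2 = ({y, z} : Finset V).card := (Finset.card_pair hzy.symm).symm
    _ ≤ (G.neighborFinset x).card := Finset.card_le_card hsub
    _ = G.degree x := G.card_neighborFinset_eq_degree x
  have hdy1 : 1 ≤ G.degree y := by
    have := Finset.card_pos.2 ⟨x, hxNy⟩
    simpa [SimpleGraph.card_neighborFinset_eq_degree] using Nat.succ_le_of_lt this
  have hdz1 : 1 ≤ dz := by
    have := Finset.card_pos.2 ⟨x, hxNz⟩
    simpa [hdz, SimpleGraph.card_neighborFinset_eq_degree] using Nat.succ_le_of_lt this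
  have habs1mε : ‖1 - (ε : ℂ)‖ ^ 2 = (1 - ε) ^ 2 := by
    have h1 : (1 : ℂ) - (ε : ℂ) = ((1 - ε : ℝ) : ℂ) := by push_cast; ring
    rw [h1, Complex.norm_real, Real.norm_eq_abs, sq_abs]
  -- Row x
  have hrowx : ∑ v : V, t x v = ((G.degree x : ℝ) - 2) + (1 - ε) ^ 2 := by
    rw [hrow x, ← Finset.add_sum_erase _ _ hyNx, ← Finset.add_sum_erase _ _ hzNx]
    have h1 : ‖f x - σ x y * f y‖ ^ 2 = 0 := by
      rw [hfx, hfy, mul_inv_cancel₀ hσxy, sub_self, norm_zero]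
      ring
    have h2 : ‖f x - σ x z * f z‖ ^ 2 = (1 - ε) ^ 2 := by
      rw [hfx, hfz]
      have : σ x z * ((ε : ℂ) * (σ x z)⁻¹) = (ε : ℂ) := by
        field_simp
      rw [this, habs1mε]
    have h3 : ∑ v ∈ ((G.neighborFinset x).erase y).erase z,
        ‖f x - σ x v * f v‖ ^ 2
        = (((G.neighborFinset x).erase y).erase z).card • (1 : ℝ) := by
      rw [Finset.sum_congr rfl fun v hv => ?_, Finset.sum_const]
      have hvz := (Finset.mem_erase.1 hv).1
      have hv' := (Finset.mem_erase.1 hv).2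
      have hvy := (Finset.mem_erase.1 hv').1
      have hvN := (Finset.mem_erase.1 hv').2
      have hadj : G.Adj x v := by simpa using hvN
      have hvx : v ≠ x := hadj.ne'
      rw [hf0 v hvx hvy hvz, hfx, mul_zero, sub_zero, norm_one, one_pow]
    have h4 : (((G.neighborFinset x).erase y).erase z).card = G.degree x - 2 := by
      rw [Finset.card_erase_of_mem hzNx, Finset.card_erase_of_mem hyNx,
        SimpleGraph.card_neighborFinset_eq_degree]
      omega
    rw [h1, h2, h3, h4]
    have : ((G.degree x - 2 : ℕ) : ℝ) = (G.degree x : ℝ) - 2 := by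
      rw [Nat.cast_sub hdx2]; norm_num
    rw [nsmul_eq_mul, mul_one, this]
    ring
  -- Row y
  have hrowy : ∑ v : V, t y v = (G.degree y : ℝ) - 1 := by
    rw [hrow y, ← Finset.add_sum_erase _ _ hxNy]
    have h1 : ‖f y - σ y x * f x‖ ^ 2 = 0 := by
      rw [hfx, hfy, hσ2 x y hxy, mul_one, sub_self, norm_zero]
      ring
    have h3 : ∑ v ∈ (G.neighborFinset y).erase x,
        ‖f y - σ y v * f v‖ ^ 2
        = ((G.neighborFinset y).erase x).card • (1 : ℝ) := by
      rw [Finset.sum_congr rfl fun v hv => ?_, Finset.sum_const]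
      have hvx := (Finset.mem_erase.1 hv).1
      have hvN := (Finset.mem_erase.1 hv).2
      have hadj : G.Adj y v := by simpa using hvN
      have hvy : v ≠ y := hadj.ne'
      have hvz : v ≠ z := by rintro rfl; exact hyz hadj
      rw [hf0 v hvx hvy hvz, hfy, mul_zero, sub_zero, norm_inv, hσ1 x y hxy, inv_one, one_pow]
    have h4 : ((G.neighborFinset y).erase x).card = G.degree y - 1 := by
      rw [Finset.card_erase_of_mem hxNy, SimpleGraph.card_neighborFinset_eq_degree]
    rw [h1, h3, h4]
    have : ((G.degree y - 1 : ℕ) : ℝ) = (G.degree y : ℝ) - 1 := by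
      rw [Nat.cast_sub hdy1]; norm_num
    rw [nsmul_eq_mul, mul_one, this]
    ring
  -- Row z
  have hrowz : ∑ v : V, t z v = (1 - ε) ^ 2 + ((dz : ℝ) - 1) * ε ^ 2 := by
    rw [hrow z, ← Finset.add_sum_erase _ _ hxNz]
    have h1 : ‖f z - σ z x * f x‖ ^ 2 = (1 - ε) ^ 2 := by
      rw [hfx, hfz, hσ2 x z hxz, mul_one]
      have : (ε : ℂ) * (σ x z)⁻¹ - (σ x z)⁻¹ = -((1 - (ε : ℂ)) * (σ x z)⁻¹) := by ring
      rw [this, norm_neg, norm_mul, norm_inv, hσ1 x z hxz, inv_one, mul_one, habs1mε]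
    have h3 : ∑ v ∈ (G.neighborFinset z).erase x,
        ‖f z - σ z v * f v‖ ^ 2
        = ((G.neighborFinset z).erase x).card • (ε ^ 2 : ℝ) := by
      rw [Finset.sum_congr rfl fun v hv => ?_, Finset.sum_const]
      have hvx := (Finset.mem_erase.1 hv).1
      have hvN := (Finset.mem_erase.1 hv).2
      have hadj : G.Adj z v := by simpa using hvN
      have hvz : v ≠ z := hadj.ne'
      have hvy : v ≠ y := by rintro rfl; exact hyz hadj.symm
      rw [hf0 v hvx hvy hvz, hfz, mul_zero, sub_zero, norm_mul, norm_inv, hσ1 x z hxz,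
        inv_one, mul_one, Complex.norm_real, Real.norm_eq_abs, sq_abs]
    have h4 : ((G.neighborFinset z).erase x).card = dz - 1 := by
      rw [Finset.card_erase_of_mem hxNz, SimpleGraph.card_neighborFinset_eq_degree]
    rw [h1, h3, h4]
    have : ((dz - 1 : ℕ) : ℝ) = (dz : ℝ) - 1 := by
      rw [Nat.cast_sub hdz1]; norm_num
    rw [nsmul_eq_mul, this]
  -- remaining rows
  set T : Finset V := {x, y, z} with hT
  have hmemT : ∀ w : V, w ∈ T ↔ (w = x ∨ w = y ∨ w = z) := by
    intro w; simp [hT]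
  have hrest : ∑ u ∈ Finset.univ \ T, ∑ v : V, t u v
      = ((G.degree x : ℝ) - 2) + ((G.degree y : ℝ) - 1) + ((dz : ℝ) - 1) * ε ^ 2 := by
    have hstep1 : ∀ u ∈ Finset.univ \ T, ∑ v : V, t u v
        = ∑ v : V, (if G.Adj u v then ‖f v‖ ^ 2 else 0) := by
      intro u hu
      have hu' := Finset.mem_sdiff.1 hu
      have hux : u ≠ x := fun h => hu'.2 (by rw [hmemT]; exact Or.inl h)
      have huy : u ≠ y := fun h => hu'.2 (by rw [hmemT]; exact Or.inr (Or.inl h))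
      have huz : u ≠ z := fun h => hu'.2 (by rw [hmemT]; exact Or.inr (Or.inr h))
      refine Finset.sum_congr rfl fun v _ => ?_
      simp only [ht]
      by_cases hadj : G.Adj u v
      · rw [if_pos hadj, if_pos hadj, hf0 u hux huy huz, zero_sub, norm_neg,
          norm_mul, hσ1 u v hadj, one_mul]
      · rw [if_neg hadj, if_neg hadj]
    rw [Finset.sum_congr rfl hstep1, Finset.sum_comm]
    have hstep2 : ∀ v : V, ∑ u ∈ Finset.univ \ T, (if G.Adj u v then ‖f v‖ ^ 2 else 0)
        = (((Finset.univ \ T).filter (fun u => G.Adj u v)).card : ℝ) * ‖f v‖ ^ 2 := by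
      intro v
      rw [← Finset.sum_filter, Finset.sum_const, nsmul_eq_mul]
    rw [Finset.sum_congr rfl fun v _ => hstep2 v]
    -- only x, y, z contribute
    rw [← Finset.sum_subset (Finset.subset_univ T) (fun v _ hv => ?_)]
    · -- sum over T
      have hsT : ∑ v ∈ T, (((Finset.univ \ T).filter (fun u => G.Adj u v)).card : ℝ)
            * ‖f v‖ ^ 2
          = (((Finset.univ \ T).filter (fun u => G.Adj u x)).card : ℝ) * ‖f x‖ ^ 2
          + (((Finset.univ \ T).filter (fun u => G.Adj u y)).card : ℝ) * ‖f y‖ ^ 2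
          + (((Finset.univ \ T).filter (fun u => G.Adj u z)).card : ℝ) * ‖f z‖ ^ 2 := by
        rw [hT]
        rw [Finset.sum_insert (by simp [hxyne, hzx.symm]),
          Finset.sum_insert (by simp [hzy.symm]), Finset.sum_singleton]
        ring
      rw [hsT]
      have hcx : ((Finset.univ \ T).filter (fun u => G.Adj u x))
          = ((G.neighborFinset x).erase y).erase z := by
        ext u
        simp only [Finset.mem_filter, Finset.mem_sdiff, Finset.mem_univ, true_and,
          Finset.mem_erase, SimpleGraph.mem_neighborFinset, hmemT]
        constructor
        · rintro ⟨hnot, hadj⟩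
          exact ⟨fun h => hnot (Or.inr (Or.inr h)), fun h => hnot (Or.inr (Or.inl h)), hadj.symm⟩
        · rintro ⟨h1, h2, hadj⟩
          refine ⟨?_, hadj.symm⟩
          rintro (rfl | rfl | rfl)
          · exact hadj.ne rfl
          · exact h2 rfl
          · exact h1 rfl
      have hcy : ((Finset.univ \ T).filter (fun u => G.Adj u y))
          = (G.neighborFinset y).erase x := by
        ext u
        simp only [Finset.mem_filter, Finset.mem_sdiff, Finset.mem_univ, true_and,
          Finset.mem_erase, SimpleGraph.mem_neighborFinset, hmemT]
        constructor
        · rintro ⟨hnot, hadj⟩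
          exact ⟨fun h => hnot (Or.inl h), hadj.symm⟩
        · rintro ⟨h1, hadj⟩
          refine ⟨?_, hadj.symm⟩
          rintro (rfl | rfl | rfl)
          · exact h1 rfl
          · exact (G.irrefl hadj)
          · exact hyz hadj
      have hcz : ((Finset.univ \ T).filter (fun u => G.Adj u z))
          = (G.neighborFinset z).erase x := by
        ext u
        simp only [Finset.mem_filter, Finset.mem_sdiff, Finset.mem_univ, true_and,
          Finset.mem_erase, SimpleGraph.mem_neighborFinset, hmemT]
        constructor
        · rintro ⟨hnot, hadj⟩
          exact ⟨fun h => hnot (Or.inl h), hadj.symm⟩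
        · rintro ⟨h1, hadj⟩
          refine ⟨?_, hadj.symm⟩
          rintro (rfl | rfl | rfl)
          · exact h1 rfl
          · exact hyz hadj.symm
          · exact (G.irrefl hadj)
      have hcardx : (((G.neighborFinset x).erase y).erase z).card = G.degree x - 2 := by
        rw [Finset.card_erase_of_mem hzNx, Finset.card_erase_of_mem hyNx,
          SimpleGraph.card_neighborFinset_eq_degree]
        omega
      have hcardy : ((G.neighborFinset y).erase x).card = G.degree y - 1 := by
        rw [Finset.card_erase_of_mem hxNy, SimpleGraph.card_neighborFinset_eq_degree]
      have hcardz : ((G.neighborFinset z).erase x).card = dz - 1 := by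
        rw [Finset.card_erase_of_mem hxNz, SimpleGraph.card_neighborFinset_eq_degree]
      have hqx : ‖f x‖ ^ 2 = 1 := by rw [hfx, norm_one, one_pow]
      have hqy : ‖f y‖ ^ 2 = 1 := by
        rw [hfy, norm_inv, hσ1 x y hxy, inv_one, one_pow]
      have hqz : ‖f z‖ ^ 2 = ε ^ 2 := by
        rw [hfz, norm_mul, norm_inv, hσ1 x z hxz, inv_one, mul_one,
          Complex.norm_real, Real.norm_eq_abs, sq_abs]
      rw [hcx, hcy, hcz, hcardx, hcardy, hcardz, hqx, hqy, hqz,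
        Nat.cast_sub hdx2, Nat.cast_sub hdy1, Nat.cast_sub hdz1]
      push_cast
      ring
    · -- terms outside T vanish
      have hvx : v ≠ x := fun h => hv (by rw [hmemT]; exact Or.inl h)
      have hvy : v ≠ y := fun h => hv (by rw [hmemT]; exact Or.inr (Or.inl h))
      have hvz : v ≠ z := fun h => hv (by rw [hmemT]; exact Or.inr (Or.inr h))
      rw [hf0 v hvx hvy hvz, norm_zero]
      ring
  -- total energy
  have hsplit : ∑ u : V, ∑ v : V, t u v
      = (∑ u ∈ Finset.univ \ T, ∑ v : V, t u v) + ∑ u ∈ T, ∑ v : V, t u v :=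
    (Finset.sum_sdiff (Finset.subset_univ T)).symm
  have hsumT : ∑ u ∈ T, ∑ v : V, t u v
      = (∑ v : V, t x v) + (∑ v : V, t y v) + (∑ v : V, t z v) := by
    rw [hT, Finset.sum_insert (by simp [hxyne, hzx.symm]),
      Finset.sum_insert (by simp [hzy.symm]), Finset.sum_singleton]
    ring
  have hE : magEnergy G σ f
      = ((G.degree x : ℝ) - 2) + ((G.degree y : ℝ) - 1) + (1 - ε) ^ 2 + ((dz : ℝ) - 1) * ε ^ 2 := by
    rw [hEt, hsplit, hsumT, hrest, hrowx, hrowy, hrowz]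
    ring
  -- denominator bound
  have hD2 : 2 ≤ magDenom f := by
    have hsub : ({x, y} : Finset V) ⊆ Finset.univ := Finset.subset_univ _
    have hle : ∑ v ∈ ({x, y} : Finset V), ‖f v‖ ^ 2 ≤ magDenom f := by
      unfold magDenom
      exact Finset.sum_le_sum_of_subset_of_nonneg hsub fun v _ _ => by positivity
    have heq : ∑ v ∈ ({x, y} : Finset V), ‖f v‖ ^ 2 = 2 := by
      rw [Finset.sum_pair hxyne, hfx, hfy, norm_one, norm_inv, hσ1 x y hxy, inv_one]
      norm_num
    linarith [hle, heq.symm.le]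
  have hD0 : 0 < magDenom f := by linarith
  -- the key numeric inequality
  have hdzε : (dz : ℝ) * ε < 1 := by
    rw [hε, mul_one_div, div_lt_one (by positivity)]
    linarith
  have hlam0 : 0 ≤ ((G.degree x : ℝ) + G.degree y) / 2 - 1 := by
    have h1 : (2 : ℝ) ≤ G.degree x := by exact_mod_cast hdx2
    have h2 : (1 : ℝ) ≤ G.degree y := by exact_mod_cast hdy1
    linarith
  have hElt : magEnergy G σ f < (((G.degree x : ℝ) + G.degree y) / 2 - 1) * magDenom f := by
    have hB : magEnergy G σ f < (G.degree x : ℝ) + G.degree y - 2 := by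
      rw [hE]
      nlinarith [hε0, hdzε, sq_nonneg ε]
    calc magEnergy G σ f < (G.degree x : ℝ) + G.degree y - 2 := hB
    _ = (((G.degree x : ℝ) + G.degree y) / 2 - 1) * 2 := by ring
    _ ≤ (((G.degree x : ℝ) + G.degree y) / 2 - 1) * magDenom f :=
        mul_le_mul_of_nonneg_left hD2 hlam0
  have := lambda1_le G σ f hfne
  calc lambda1 G σ ≤ magEnergy G σ f / magDenom f := this
  _ < ((G.degree x : ℝ) + G.degree y) / 2 - 1 := by
      rw [div_lt_iff₀ hD0]; exact hElt

theorem maximal_edge_bound_rigidity (G : SimpleGraph V) [DecidableRel G.Adj]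
    (x y : V) (hxy : G.Adj x y)
    (hatt : ∃ σ : V → V → ℂ, IsMagPotential G σ ∧ lambda1 G σ = magHeight G)
    (h : magHeight G = ((G.degree x : ℝ) + G.degree y) / 2 - 1) :
    (∀ z : V, z ≠ x → z ≠ y → (G.Adj x z ↔ G.Adj y z)) ∧
    G.degree x = G.degree y := by
  classical
  obtain ⟨σ, hσ, hlam⟩ := hatt
  have hiff : ∀ z : V, z ≠ x → z ≠ y → (G.Adj x z ↔ G.Adj y z) := by
    intro z hzx hzy
    constructor
    · intro hxz
      by_contra hyz
      have := key_step G σ hσ x y z hxy hxz hyz hzy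
      rw [hlam, h] at this
      exact lt_irrefl _ this
    · intro hyz
      by_contra hxz
      have := key_step G σ hσ y x z hxy.symm hyz hxz hzx
      rw [hlam, h] at this
      have h2 : ((G.degree y : ℝ) + G.degree x) / 2 - 1
          = ((G.degree x : ℝ) + G.degree y) / 2 - 1 := by ring
      rw [h2] at this
      exact lt_irrefl _ this
  refine ⟨hiff, ?_⟩
  have hset : (G.neighborFinset x).erase y = (G.neighborFinset y).erase x := by
    ext w
    simp only [Finset.mem_erase, SimpleGraph.mem_neighborFinset]
    constructor
    · rintro ⟨hwy, hadj⟩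
      exact ⟨hadj.ne', (hiff w hadj.ne' hwy).1 hadj⟩
    · rintro ⟨hwx, hadj⟩
      exact ⟨hadj.ne', (hiff w hwx hadj.ne').2 hadj⟩
  have hx : G.degree x = ((G.neighborFinset x).erase y).card + 1 := by
    rw [Finset.card_erase_of_mem ((SimpleGraph.mem_neighborFinset G x y).2 hxy),
      SimpleGraph.card_neighborFinset_eq_degree]
    have : 1 ≤ G.degree x := by
      have hne : (G.neighborFinset x).Nonempty := ⟨y, (SimpleGraph.mem_neighborFinset G x y).2 hxy⟩
      have := Finset.card_pos.2 hne
      simpa [SimpleGraph.card_neighborFinset_eq_degree] using Nat.succ_le_of_lt this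
    omega
  have hy : G.degree y = ((G.neighborFinset y).erase x).card + 1 := by
    rw [Finset.card_erase_of_mem ((SimpleGraph.mem_neighborFinset G y x).2 hxy.symm),
      SimpleGraph.card_neighborFinset_eq_degree]
    have : 1 ≤ G.degree y := by
      have hne : (G.neighborFinset y).Nonempty := ⟨x, (SimpleGraph.mem_neighborFinset G y x).2 hxy.symm⟩
      have := Finset.card_pos.2 hne
      simpa [SimpleGraph.card_neighborFinset_eq_degree] using Nat.succ_le_of_lt this
    omega
  rw [hx, hy, hset]
end

section
/- A connected finite graph G with ν(G) = d_max − 1, where d_max is the maximal vertex degree, is a complete graph on d_max + 1 vertices. -/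
open Finset

variable {V : Type*} [Fintype V] {W : Type*} [Fintype W]

lemma rayleigh_bound {G : SimpleGraph V} {σ : V → V → ℂ} {c : ℝ}
    (hl : lambda1 G σ = c) {f : V → ℂ} (hf : f ≠ 0) :
    c * magDenom f ≤ magEnergy G σ f := by
  have hmem : magEnergy G σ f / magDenom f ∈
      { r : ℝ | ∃ f : V → ℂ, f ≠ 0 ∧ r = magEnergy G σ f / magDenom f } := ⟨f, hf, rfl⟩
  have hbdd : BddBelow { r : ℝ | ∃ f : V → ℂ, f ≠ 0 ∧ r = magEnergy G σ f / magDenom f } := by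
    refine ⟨0, ?_⟩
    rintro r ⟨g, hg, rfl⟩
    exact div_nonneg (magEnergy_nonneg G σ g) (magDenom_nonneg g)
  have hle := csInf_le hbdd hmem
  rw [← lambda1, hl] at hle
  have hd := magDenom_pos hf
  rw [le_div_iff₀ hd] at hle
  linarith

open scoped Classical in
noncomputable def dd (G : SimpleGraph V) (u : V) : ℕ :=
  (univ.filter (fun v => G.Adj u v)).card

open scoped Classical in
lemma sum_ite_adj (G : SimpleGraph V) (u : V) (c : ℝ) :
    (∑ v : V, if G.Adj u v then c else 0) = (dd G u : ℝ) * c := by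
  rw [Finset.sum_ite, Finset.sum_const, Finset.sum_const_zero, add_zero, dd, nsmul_eq_mul]

open scoped Classical in
lemma magEnergy_eq {G : SimpleGraph V} {σ : V → V → ℂ} (hσ : IsMagPotential G σ) (f : V → ℂ) :
    magEnergy G σ f = (∑ u : V, (dd G u : ℝ) * ‖f u‖ ^ 2)
      - ∑ u : V, ∑ v : V,
          (if G.Adj u v then ((starRingEnd ℂ) (f u) * (σ u v * f v)).re else 0) := by
  unfold magEnergy
  have step : ∀ u v : V, (if G.Adj u v then ‖f u - σ u v * f v‖ ^ 2 else 0)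
      = ((if G.Adj u v then ‖f u‖ ^ 2 else 0)
          + (if G.Adj u v then ‖f v‖ ^ 2 else 0))
        - 2 * (if G.Adj u v then ((starRingEnd ℂ) (f u) * (σ u v * f v)).re else 0) := by
    intro u v
    by_cases h : G.Adj u v
    · rw [if_pos h, if_pos h, if_pos h, if_pos h]
      have habs : ‖σ u v‖ = 1 := hσ.1 u v h
      rw [Complex.sq_norm, Complex.sq_norm, Complex.sq_norm, Complex.normSq_sub]
      have h1 : Complex.normSq (σ u v * f v) = Complex.normSq (f v) := by
        rw [Complex.normSq_mul, ← Complex.sq_norm (σ u v), habs]; ring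
      have h2 : (f u * (starRingEnd ℂ) (σ u v * f v)).re
          = ((starRingEnd ℂ) (f u) * (σ u v * f v)).re := by
        rw [← Complex.conj_re (f u * (starRingEnd ℂ) (σ u v * f v)), map_mul,
          Complex.conj_conj]
      rw [h1, h2]
    · simp [h]
  simp only [step]
  have swap : (∑ u : V, ∑ v : V, (if G.Adj u v then ‖f v‖ ^ 2 else 0))
      = ∑ u : V, (dd G u : ℝ) * ‖f u‖ ^ 2 := by
    rw [Finset.sum_comm]
    refine Finset.sum_congr rfl fun v _ => ?_
    have : ∀ u : V, (if G.Adj u v then ‖f v‖ ^ 2 else 0)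
        = (if G.Adj v u then ‖f v‖ ^ 2 else 0) := by
      intro u; rw [SimpleGraph.adj_comm]
    rw [Finset.sum_congr rfl fun u _ => this u, sum_ite_adj]
  have expand : ∀ u : V, ∑ v : V,
      (((if G.Adj u v then ‖f u‖ ^ 2 else 0)
          + (if G.Adj u v then ‖f v‖ ^ 2 else 0))
        - 2 * (if G.Adj u v then ((starRingEnd ℂ) (f u) * (σ u v * f v)).re else 0))
      = ((dd G u : ℝ) * ‖f u‖ ^ 2
          + ∑ v : V, (if G.Adj u v then ‖f v‖ ^ 2 else 0))
        - 2 * ∑ v : V, (if G.Adj u v then ((starRingEnd ℂ) (f u) * (σ u v * f v)).re else 0) := by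
    intro u
    rw [Finset.sum_sub_distrib, Finset.sum_add_distrib, ← Finset.mul_sum, sum_ite_adj]
  rw [Finset.sum_congr rfl fun u _ => expand u, Finset.sum_sub_distrib,
    Finset.sum_add_distrib, swap, ← Finset.mul_sum]
  ring

open scoped Classical in
lemma sum_eq_pair {M : Type*} [AddCommMonoid M] {g : V → M} {x y : V} (hxy : x ≠ y)
    (hg : ∀ v, v ≠ x → v ≠ y → g v = 0) : ∑ v : V, g v = g x + g y := by
  rw [← Finset.sum_pair hxy]
  refine (Finset.sum_subset (Finset.subset_univ _) ?_).symm
  intro v _ hv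
  simp only [Finset.mem_insert, Finset.mem_singleton, not_or] at hv
  exact hg v hv.1 hv.2

open scoped Classical in
lemma sum_eq_triple {M : Type*} [AddCommMonoid M] {g : V → M} {x y z : V}
    (hxy : x ≠ y) (hxz : x ≠ z) (hyz : y ≠ z)
    (hg : ∀ v, v ≠ x → v ≠ y → v ≠ z → g v = 0) : ∑ v : V, g v = g x + g y + g z := by
  have h1 : ∑ v ∈ ({x, y, z} : Finset V), g v = g x + (g y + g z) := by
    rw [Finset.sum_insert (by simp [hxy, hxz]), Finset.sum_pair hyz]
  rw [← add_assoc] at h1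
  rw [← h1]
  refine (Finset.sum_subset (Finset.subset_univ _) ?_).symm
  intro v _ hv
  simp only [Finset.mem_insert, Finset.mem_singleton, not_or] at hv
  exact hg v hv.1 hv.2.1 hv.2.2

open scoped Classical in
lemma deg_step {G : SimpleGraph V} {σ : V → V → ℂ} (hσ : IsMagPotential G σ) {c : ℝ}
    (hl : lambda1 G σ = c) {x y : V} (hxy : G.Adj x y) :
    c * 2 ≤ (dd G x : ℝ) + (dd G y : ℝ) - 2 := by
  have hne : x ≠ y := hxy.ne
  have habs : ‖σ x y‖ = 1 := hσ.1 x y hxy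
  have hσ0 : σ x y ≠ 0 := by
    intro h0; rw [h0] at habs; simp at habs
  set f : V → ℂ := fun v => if v = x then 1 else if v = y then (σ x y)⁻¹ else 0 with hf
  have hfx : f x = 1 := by simp [hf]
  have hfy : f y = (σ x y)⁻¹ := by simp [hf, hne.symm]
  have hfo : ∀ v, v ≠ x → v ≠ y → f v = 0 := by intro v h1 h2; simp [hf, h1, h2]
  have hfne : f ≠ 0 := by
    intro h0
    have := congrFun h0 x
    rw [hfx] at this; simp at this
  have habsinv : ‖(σ x y)⁻¹‖ = 1 := by rw [norm_inv, habs]; norm_num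
  have hden : magDenom f = 2 := by
    unfold magDenom
    rw [sum_eq_pair hne (fun v h1 h2 => by rw [hfo v h1 h2]; simp)]
    rw [hfx, hfy, habsinv]; norm_num
  have hC : (∑ u : V, ∑ v : V,
      (if G.Adj u v then ((starRingEnd ℂ) (f u) * (σ u v * f v)).re else 0)) = 2 := by
    rw [sum_eq_pair hne (g := fun u => ∑ v : V,
        (if G.Adj u v then ((starRingEnd ℂ) (f u) * (σ u v * f v)).re else 0))
      (fun u h1 h2 => by
        refine Finset.sum_eq_zero fun v _ => ?_
        rw [hfo u h1 h2]
        simp)]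
    have hx : (∑ v : V, (if G.Adj x v then ((starRingEnd ℂ) (f x) * (σ x v * f v)).re else 0)) = 1 := by
      rw [sum_eq_pair hne (fun v h1 h2 => by rw [hfo v h1 h2]; simp)]
      rw [if_neg (G.irrefl), if_pos hxy, hfx, hfy, mul_inv_cancel₀ hσ0]
      simp
    have hy : (∑ v : V, (if G.Adj y v then ((starRingEnd ℂ) (f y) * (σ y v * f v)).re else 0)) = 1 := by
      rw [sum_eq_pair hne (fun v h1 h2 => by rw [hfo v h1 h2]; simp)]
      rw [if_neg (G.irrefl), if_pos hxy.symm, hfx, hfy, hσ.2 x y hxy, mul_one]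
      rw [Complex.conj_mul']
      simp [Complex.sq_norm, Complex.normSq_inv, ← Complex.sq_norm (σ x y), habs]
    rw [hx, hy]; norm_num
  have hS1 : (∑ u : V, (dd G u : ℝ) * ‖f u‖ ^ 2) = (dd G x : ℝ) + (dd G y : ℝ) := by
    rw [sum_eq_pair hne (fun v h1 h2 => by rw [hfo v h1 h2]; simp)]
    rw [hfx, hfy, habsinv]; norm_num
  have hE : magEnergy G σ f = (dd G x : ℝ) + (dd G y : ℝ) - 2 := by
    rw [magEnergy_eq hσ f, hS1, hC]
  have := rayleigh_bound hl hfne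
  rw [hden, hE] at this
  exact this

open scoped Classical in
lemma clique_step {G : SimpleGraph V} {σ : V → V → ℂ} (hσ : IsMagPotential G σ) {c : ℝ}
    (hl : lambda1 G σ = c) {x y z : V} (hxy : G.Adj x y) (hxz : G.Adj x z)
    (hyzne : y ≠ z) (hyz : ¬ G.Adj y z) :
    c * 3 ≤ (dd G x : ℝ) + (dd G y : ℝ) + (dd G z : ℝ) - 4 := by
  have hnxy : x ≠ y := hxy.ne
  have hnxz : x ≠ z := hxz.ne
  have habs1 : ‖σ x y‖ = 1 := hσ.1 x y hxy
  have habs2 : ‖σ x z‖ = 1 := hσ.1 x z hxz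
  have hσ1 : σ x y ≠ 0 := by intro h0; rw [h0] at habs1; simp at habs1
  have hσ2 : σ x z ≠ 0 := by intro h0; rw [h0] at habs2; simp at habs2
  set f : V → ℂ := fun v => if v = x then 1 else if v = y then (σ x y)⁻¹
    else if v = z then (σ x z)⁻¹ else 0 with hf
  have hfx : f x = 1 := by simp [hf]
  have hfy : f y = (σ x y)⁻¹ := by simp [hf, hnxy.symm]
  have hfz : f z = (σ x z)⁻¹ := by simp [hf, hnxz.symm, hyzne.symm]
  have hfo : ∀ v, v ≠ x → v ≠ y → v ≠ z → f v = 0 := by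
    intro v h1 h2 h3; simp [hf, h1, h2, h3]
  have hfne : f ≠ 0 := by
    intro h0
    have := congrFun h0 x
    rw [hfx] at this; simp at this
  have habsinv1 : ‖(σ x y)⁻¹‖ = 1 := by rw [norm_inv, habs1]; norm_num
  have habsinv2 : ‖(σ x z)⁻¹‖ = 1 := by rw [norm_inv, habs2]; norm_num
  have hden : magDenom f = 3 := by
    unfold magDenom
    rw [sum_eq_triple hnxy hnxz hyzne (fun v h1 h2 h3 => by rw [hfo v h1 h2 h3]; simp)]
    rw [hfx, hfy, hfz, habsinv1, habsinv2]; norm_num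
  have hC : (∑ u : V, ∑ v : V,
      (if G.Adj u v then ((starRingEnd ℂ) (f u) * (σ u v * f v)).re else 0)) = 4 := by
    rw [sum_eq_triple hnxy hnxz hyzne (g := fun u => ∑ v : V,
        (if G.Adj u v then ((starRingEnd ℂ) (f u) * (σ u v * f v)).re else 0))
      (fun u h1 h2 h3 => by
        refine Finset.sum_eq_zero fun v _ => ?_
        rw [hfo u h1 h2 h3]
        simp)]
    have hx : (∑ v : V, (if G.Adj x v then ((starRingEnd ℂ) (f x) * (σ x v * f v)).re else 0)) = 2 := by
      rw [sum_eq_triple hnxy hnxz hyzne (fun v h1 h2 h3 => by rw [hfo v h1 h2 h3]; simp)]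
      rw [if_neg (G.irrefl), if_pos hxy, if_pos hxz, hfx, hfy, hfz,
        mul_inv_cancel₀ hσ1, mul_inv_cancel₀ hσ2]
      norm_num
    have hy : (∑ v : V, (if G.Adj y v then ((starRingEnd ℂ) (f y) * (σ y v * f v)).re else 0)) = 1 := by
      rw [sum_eq_triple hnxy hnxz hyzne (fun v h1 h2 h3 => by rw [hfo v h1 h2 h3]; simp)]
      rw [if_neg (G.irrefl), if_pos hxy.symm, if_neg hyz, hfx, hfy, hσ.2 x y hxy, mul_one]
      rw [Complex.conj_mul']
      simp [Complex.sq_norm, Complex.normSq_inv, ← Complex.sq_norm (σ x y), habs1]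
    have hz : (∑ v : V, (if G.Adj z v then ((starRingEnd ℂ) (f z) * (σ z v * f v)).re else 0)) = 1 := by
      rw [sum_eq_triple hnxy hnxz hyzne (fun v h1 h2 h3 => by rw [hfo v h1 h2 h3]; simp)]
      rw [if_neg (G.irrefl), if_pos hxz.symm, if_neg (fun hzy => hyz hzy.symm), hfx, hfz,
        hσ.2 x z hxz, mul_one]
      rw [Complex.conj_mul']
      simp [Complex.sq_norm, Complex.normSq_inv, ← Complex.sq_norm (σ x z), habs2]
    rw [hx, hy, hz]; norm_num
  have hS1 : (∑ u : V, (dd G u : ℝ) * ‖f u‖ ^ 2)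
      = (dd G x : ℝ) + (dd G y : ℝ) + (dd G z : ℝ) := by
    rw [sum_eq_triple hnxy hnxz hyzne (fun v h1 h2 h3 => by rw [hfo v h1 h2 h3]; simp)]
    rw [hfx, hfy, hfz, habsinv1, habsinv2]; norm_num
  have hE : magEnergy G σ f = (dd G x : ℝ) + (dd G y : ℝ) + (dd G z : ℝ) - 4 := by
    rw [magEnergy_eq hσ f, hS1, hC]
  have := rayleigh_bound hl hfne
  rw [hden, hE] at this
  exact this


theorem magHeight_dmax_rigidity (G : SimpleGraph V) [DecidableRel G.Adj]
    (hconn : G.Connected)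
    (hatt : ∃ σ : V → V → ℂ, IsMagPotential G σ ∧ lambda1 G σ = magHeight G)
    (D : ℕ) (hD : D = univ.sup fun x => G.degree x)
    (h : magHeight G = (D : ℝ) - 1) :
    G = ⊤ ∧ Fintype.card V = D + 1 := by
  obtain ⟨σ, hσ, hla⟩ := hatt
  have hl : lambda1 G σ = (D : ℝ) - 1 := by rw [hla, h]
  have hVne : Nonempty V := hconn.nonempty
  have hdd : ∀ u : V, dd G u = G.degree u := by
    intro u
    unfold dd
    rw [SimpleGraph.degree, SimpleGraph.neighborFinset_eq_filter]
    congr!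
  have hle : ∀ u : V, G.degree u ≤ D := fun u => hD ▸ Finset.le_sup (f := fun x => G.degree x) (Finset.mem_univ u)
  obtain ⟨x₀, -, hx₀⟩ := Finset.exists_mem_eq_sup (univ : Finset V) Finset.univ_nonempty
    (fun x => G.degree x)
  rw [← hD] at hx₀
  have step : ∀ {a b : V}, G.Adj a b → G.degree a = D → G.degree b = D := by
    intro a b hab ha
    have h2 := deg_step hσ hl hab
    rw [hdd, hdd, ha] at h2
    have h3 : (D : ℝ) ≤ (G.degree b : ℝ) := by linarith
    exact le_antisymm (hle b) (by exact_mod_cast h3)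
  have reg : ∀ v : V, G.degree v = D := by
    have H : ∀ (a b : V), G.Walk a b → G.degree a = D → G.degree b = D := by
      intro a b p
      induction p with
      | nil => exact id
      | cons hadj p ih => exact fun ha => ih (step hadj ha)
    intro v
    obtain ⟨w⟩ := hconn.preconnected x₀ v
    exact H x₀ v w hx₀.symm
  have clique : ∀ {a b c : V}, G.Adj a b → G.Adj a c → b ≠ c → G.Adj b c := by
    intro a b c hab hac hbc
    by_contra hn
    have h3 := clique_step hσ hl hab hac hbc hn
    rw [hdd, hdd, hdd, reg, reg, reg] at h3
    have hD1 : ((D : ℝ) - 1) * 3 = 3 * (D : ℝ) - 3 := by ring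
    rw [hD1] at h3
    have : ((D:ℝ)) + (D:ℝ) + (D:ℝ) - 4 = 3 * (D:ℝ) - 4 := by ring
    rw [this] at h3
    linarith
  classical
  set S : Finset V := insert x₀ (G.neighborFinset x₀) with hS
  have hx₀S : x₀ ∈ S := Finset.mem_insert_self _ _
  have hcardS : S.card = D + 1 := by
    rw [hS, Finset.card_insert_of_notMem (by simp),
      SimpleGraph.card_neighborFinset_eq_degree, reg]
  have closure : ∀ u ∈ S, ∀ w : V, G.Adj u w → w ∈ S := by
    intro u hu w huw
    rcases Finset.mem_insert.mp hu with rfl | hu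
    · exact Finset.mem_insert_of_mem (by rwa [SimpleGraph.mem_neighborFinset])
    · have hxu : G.Adj x₀ u := (SimpleGraph.mem_neighborFinset _ _ _).mp hu
      have hD1 : 1 ≤ D := by
        have : 0 < G.degree x₀ := by
          rw [← SimpleGraph.card_neighborFinset_eq_degree]
          exact Finset.card_pos.mpr ⟨u, hu⟩
        rw [reg x₀] at this
        omega
      have hsub : insert x₀ ((G.neighborFinset x₀).erase u) ⊆ G.neighborFinset u := by
        intro v hv
        rcases Finset.mem_insert.mp hv with rfl | hv
        · rw [SimpleGraph.mem_neighborFinset]; exact hxu.symm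
        · obtain ⟨hvne, hv⟩ := Finset.mem_erase.mp hv
          rw [SimpleGraph.mem_neighborFinset] at hv ⊢
          exact clique hxu hv (Ne.symm hvne)
      have hcard1 : (insert x₀ ((G.neighborFinset x₀).erase u)).card = D := by
        rw [Finset.card_insert_of_notMem (by simp), Finset.card_erase_of_mem hu,
          SimpleGraph.card_neighborFinset_eq_degree, reg]
        omega
      have heq : insert x₀ ((G.neighborFinset x₀).erase u) = G.neighborFinset u := by
        apply Finset.eq_of_subset_of_card_le hsub
        rw [hcard1, SimpleGraph.card_neighborFinset_eq_degree, reg]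
      have hw : w ∈ G.neighborFinset u := by
        rw [SimpleGraph.mem_neighborFinset]; exact huw
      rw [← heq] at hw
      rcases Finset.mem_insert.mp hw with rfl | h2
      · exact hx₀S
      · exact Finset.mem_insert_of_mem (Finset.mem_of_mem_erase h2)
  have hall : ∀ v : V, v ∈ S := by
    have H : ∀ (a b : V), G.Walk a b → a ∈ S → b ∈ S := by
      intro a b p
      induction p with
      | nil => exact id
      | cons hadj p ih => exact fun ha => ih (closure _ ha _ hadj)
    intro v
    obtain ⟨w⟩ := hconn.preconnected x₀ v
    exact H x₀ v w hx₀S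
  have hSuniv : S = Finset.univ := Finset.eq_univ_iff_forall.mpr hall
  constructor
  · ext a b
    simp only [SimpleGraph.top_adj]
    constructor
    · exact fun hab => hab.ne
    · intro hne
      rcases Finset.mem_insert.mp (hall a) with rfl | ha
      · rcases Finset.mem_insert.mp (hall b) with rfl | hb
        · exact absurd rfl hne
        · exact (SimpleGraph.mem_neighborFinset _ _ _).mp hb
      · rcases Finset.mem_insert.mp (hall b) with rfl | hb
        · exact ((SimpleGraph.mem_neighborFinset _ _ _).mp ha).symm
        · exact clique ((SimpleGraph.mem_neighborFinset _ _ _).mp ha)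
            ((SimpleGraph.mem_neighborFinset _ _ _).mp hb) hne
  · rw [← hcardS, hSuniv, Finset.card_univ]
end

section
/- Any maximal magnetic potential of the complete graph K_d is gauge equivalent to the anti-balanced signature σ̄ ≡ −1; equivalently, if σ̂: E^{or}(K_d) → S¹ satisfies λ₁^{σ̂}(K_d) = d−2, then σ̂(x_m,x_k) σ̂(x_k,x_l) σ̂(x_l,x_m) = −1 for all distinct vertices x_m, x_k, x_l, and σ̂ is gauge equivalent to σ̄. -/
open Finset

variable {V : Type*} [Fintype V] {W : Type*} [Fintype W]

lemma unit_ne_zero' {z : ℂ} (h : ‖z‖ = 1) : z ≠ 0 := by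
  intro h0; rw [h0] at h; simp at h

lemma energy_three {d : ℕ} (σ : Fin d → Fin d → ℂ)
    (habs : ∀ x y : Fin d, x ≠ y → ‖σ x y‖ = 1)
    {m k l : Fin d} (hmk : m ≠ k) (hkl : k ≠ l) (hlm : l ≠ m)
    (a b c : ℂ) :
    magEnergy (⊤ : SimpleGraph (Fin d)) σ
      (fun x => if x = m then a else if x = k then b else if x = l then c else 0) =
    (1/2) * ((‖a - σ m k * b‖)^2 + (‖a - σ m l * c‖)^2
      + (‖b - σ k m * a‖)^2 + (‖b - σ k l * c‖)^2
      + (‖c - σ l m * a‖)^2 + (‖c - σ l k * b‖)^2)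
      + ((d - 3 : ℕ) : ℝ) * ((‖a‖)^2 + (‖b‖)^2 + (‖c‖)^2) := by
  classical
  set f : Fin d → ℂ := fun x => if x = m then a else if x = k then b else if x = l then c else 0
    with hf
  have hkm : k ≠ m := hmk.symm
  have hlk : l ≠ k := hkl.symm
  have hml : m ≠ l := hlm.symm
  have hfm : f m = a := by simp [hf]
  have hfk : f k = b := by simp [hf, hkm]
  have hfl : f l = c := by simp [hf, hlm, hlk]
  have hfo : ∀ x : Fin d, x ≠ m → x ≠ k → x ≠ l → f x = 0 := by
    intro x h1 h2 h3; simp [hf, h1, h2, h3]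
  set S : Finset (Fin d) := {m, k, l} with hS
  have hmS : m ∉ ({k, l} : Finset (Fin d)) := by simp [hmk, hml]
  have hkS : k ∉ ({l} : Finset (Fin d)) := by simp [hkl]
  have hcard : S.card = 3 := by
    rw [hS, Finset.card_insert_of_notMem hmS, Finset.card_insert_of_notMem hkS,
      Finset.card_singleton]
  have hcc : (Sᶜ).card = d - 3 := by
    rw [Finset.card_compl, hcard, Fintype.card_fin]
  simp only [magEnergy, SimpleGraph.top_adj]
  have habs0 : ∀ (x y : Fin d) (z : ℂ), x ≠ y →
      ‖0 - σ x y * z‖ = ‖z‖ := by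
    intro x y z hxy
    rw [zero_sub, norm_neg, norm_mul, habs x y hxy, one_mul]
  -- inner sum for x outside S
  have hrow_out : ∀ x ∈ Sᶜ,
      (∑ y : Fin d, if x ≠ y then ‖f x - σ x y * f y‖ ^ 2 else 0)
        = (‖a‖)^2 + (‖b‖)^2 + (‖c‖)^2 := by
    intro x hx
    rw [Finset.mem_compl, hS] at hx
    simp only [Finset.mem_insert, Finset.mem_singleton, not_or] at hx
    obtain ⟨hx1, hx2, hx3⟩ := hx
    have hfx : f x = 0 := hfo x hx1 hx2 hx3
    rw [← Finset.sum_add_sum_compl S]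
    have h1 : (∑ y ∈ S, if x ≠ y then ‖f x - σ x y * f y‖ ^ 2 else 0)
        = (‖a‖)^2 + (‖b‖)^2 + (‖c‖)^2 := by
      rw [hS, Finset.sum_insert hmS, Finset.sum_insert hkS, Finset.sum_singleton]
      rw [if_pos hx1, if_pos hx2, if_pos hx3, hfm, hfk, hfl, hfx,
        habs0 x m a hx1, habs0 x k b hx2, habs0 x l c hx3]
      ring
    have h2 : (∑ y ∈ Sᶜ, if x ≠ y then ‖f x - σ x y * f y‖ ^ 2 else 0) = 0 := by
      apply Finset.sum_eq_zero
      intro y hy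
      rw [Finset.mem_compl, hS] at hy
      simp only [Finset.mem_insert, Finset.mem_singleton, not_or] at hy
      obtain ⟨hy1, hy2, hy3⟩ := hy
      have hfy : f y = 0 := hfo y hy1 hy2 hy3
      rw [hfx, hfy]
      simp
    rw [h1, h2, add_zero]
  -- inner sum for a vertex in S
  have hrow_in : ∀ (x : Fin d) (z : ℂ), x ∈ S → f x = z →
      (∑ y ∈ Sᶜ, if x ≠ y then ‖f x - σ x y * f y‖ ^ 2 else 0)
        = ((d - 3 : ℕ) : ℝ) * (‖z‖)^2 := by
    intro x z hxS hfx
    have h1 : ∀ y ∈ Sᶜ, (if x ≠ y then ‖f x - σ x y * f y‖ ^ 2 else 0)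
        = (‖z‖)^2 := by
      intro y hy
      have hxy : x ≠ y := by
        intro h; rw [h] at hxS; exact (Finset.mem_compl.mp hy) hxS
      rw [Finset.mem_compl, hS] at hy
      simp only [Finset.mem_insert, Finset.mem_singleton, not_or] at hy
      obtain ⟨hy1, hy2, hy3⟩ := hy
      rw [if_pos hxy, hfo y hy1 hy2 hy3, hfx, mul_zero, sub_zero]
    rw [Finset.sum_congr rfl h1, Finset.sum_const, hcc, nsmul_eq_mul]
  have hrow_m : (∑ y : Fin d, if m ≠ y then ‖f m - σ m y * f y‖ ^ 2 else 0)
      = (‖a - σ m k * b‖)^2 + (‖a - σ m l * c‖)^2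
        + ((d - 3 : ℕ) : ℝ) * (‖a‖)^2 := by
    rw [← Finset.sum_add_sum_compl S, hrow_in m a (by simp [hS]) hfm]
    congr 1
    rw [hS, Finset.sum_insert hmS, Finset.sum_insert hkS, Finset.sum_singleton]
    rw [if_neg (by simp), if_pos hmk, if_pos hml, hfm, hfk, hfl]
    ring
  have hrow_k : (∑ y : Fin d, if k ≠ y then ‖f k - σ k y * f y‖ ^ 2 else 0)
      = (‖b - σ k m * a‖)^2 + (‖b - σ k l * c‖)^2
        + ((d - 3 : ℕ) : ℝ) * (‖b‖)^2 := by
    rw [← Finset.sum_add_sum_compl S, hrow_in k b (by simp [hS]) hfk]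
    congr 1
    rw [hS, Finset.sum_insert hmS, Finset.sum_insert hkS, Finset.sum_singleton]
    rw [if_pos hkm, if_neg (by simp), if_pos hkl, hfm, hfk, hfl]
    ring
  have hrow_l : (∑ y : Fin d, if l ≠ y then ‖f l - σ l y * f y‖ ^ 2 else 0)
      = (‖c - σ l m * a‖)^2 + (‖c - σ l k * b‖)^2
        + ((d - 3 : ℕ) : ℝ) * (‖c‖)^2 := by
    rw [← Finset.sum_add_sum_compl S, hrow_in l c (by simp [hS]) hfl]
    congr 1
    rw [hS, Finset.sum_insert hmS, Finset.sum_insert hkS, Finset.sum_singleton]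
    rw [if_pos hlm, if_pos hlk, if_neg (by simp), hfm, hfk, hfl]
    ring
  rw [← Finset.sum_add_sum_compl S]
  rw [Finset.sum_congr rfl hrow_out, Finset.sum_const, hcc, nsmul_eq_mul]
  rw [hS, Finset.sum_insert hmS, Finset.sum_insert hkS, Finset.sum_singleton]
  rw [hrow_m, hrow_k, hrow_l]
  ring

lemma denom_three {d : ℕ}
    {m k l : Fin d} (hmk : m ≠ k) (hkl : k ≠ l) (hlm : l ≠ m)
    (a b c : ℂ) :
    magDenom (fun x : Fin d => if x = m then a else if x = k then b else if x = l then c else 0) =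
      (‖a‖)^2 + (‖b‖)^2 + (‖c‖)^2 := by
  classical
  set f : Fin d → ℂ := fun x => if x = m then a else if x = k then b else if x = l then c else 0
    with hf
  have hkm : k ≠ m := hmk.symm
  have hlk : l ≠ k := hkl.symm
  have hml : m ≠ l := hlm.symm
  have hmS : m ∉ ({k, l} : Finset (Fin d)) := by simp [hmk, hml]
  have hkS : k ∉ ({l} : Finset (Fin d)) := by simp [hkl]
  rw [magDenom]
  rw [← Finset.sum_subset (Finset.subset_univ ({m, k, l} : Finset (Fin d)))]
  · rw [Finset.sum_insert hmS, Finset.sum_insert hkS, Finset.sum_singleton]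
    simp [hf, hkm, hlm, hlk]
    ring
  · intro x _ hx
    simp only [Finset.mem_insert, Finset.mem_singleton, not_or] at hx
    obtain ⟨h1, h2, h3⟩ := hx
    simp [hf, h1, h2, h3]

set_option maxHeartbeats 1000000 in
theorem complete_maximal_potential_antibalanced (d : ℕ) (hd : 3 ≤ d)
    (σ : Fin d → Fin d → ℂ)
    (hσ : IsMagPotential (⊤ : SimpleGraph (Fin d)) σ)
    (hmax : lambda1 (⊤ : SimpleGraph (Fin d)) σ = (d : ℝ) - 2) :
    (∀ m k l : Fin d, m ≠ k → k ≠ l → l ≠ m → σ m k * σ k l * σ l m = -1) ∧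
    ∃ τ : Fin d → ℂ, (∀ x, ‖τ x‖ = 1) ∧
      ∀ x y : Fin d, x ≠ y → (τ x)⁻¹ * σ x y * τ y = -1 := by
  have habs : ∀ x y : Fin d, x ≠ y → ‖σ x y‖ = 1 := by
    intro x y h; exact hσ.1 x y (by simpa using h)
  have hinv : ∀ x y : Fin d, x ≠ y → σ y x = (σ x y)⁻¹ := by
    intro x y h; exact hσ.2 x y (by simpa using h)
  have hbdd : BddBelow { r : ℝ | ∃ f : Fin d → ℂ, f ≠ 0 ∧
      r = magEnergy (⊤ : SimpleGraph (Fin d)) σ f / magDenom f } := by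
    refine ⟨0, ?_⟩
    rintro r ⟨f, hf, rfl⟩
    apply div_nonneg
    · rw [magEnergy]
      apply mul_nonneg (by norm_num)
      apply Finset.sum_nonneg; intro x _
      apply Finset.sum_nonneg; intro y _
      split_ifs <;> positivity
    · rw [magDenom]; apply Finset.sum_nonneg; intro x _; positivity
  have tri : ∀ m k l : Fin d, m ≠ k → k ≠ l → l ≠ m → σ m k * σ k l * σ l m = -1 := by
    intro m k l hmk hkl hlm
    by_contra hne
    set u := σ m k with hudef
    set v := σ k l with hvdef
    set s := σ l m with hsdef
    have hu : ‖u‖ = 1 := habs m k hmk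
    have hv : ‖v‖ = 1 := habs k l hkl
    have hs : ‖s‖ = 1 := habs l m hlm
    have hu0 : u ≠ 0 := unit_ne_zero' hu
    have hv0 : v ≠ 0 := unit_ne_zero' hv
    have hs0 : s ≠ 0 := unit_ne_zero' hs
    have habsh : ‖u * v * s‖ = 1 := by rw [norm_mul, norm_mul, hu, hv, hs]; ring
    set θ := (u * v * s).arg with hθ
    have hexp : Complex.exp (θ * Complex.I) = u * v * s := by
      have h := Complex.norm_mul_exp_arg_mul_I (u * v * s)
      rwa [habsh, Complex.ofReal_one, one_mul] at h
    have hθpi : θ ≠ Real.pi := by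
      intro he
      apply hne
      rw [← hexp, he]
      push_cast
      rw [Complex.exp_pi_mul_I]
    have hθlt : θ < Real.pi := lt_of_le_of_ne (Complex.arg_le_pi _) hθpi
    have hθgt : -Real.pi < θ := Complex.neg_pi_lt_arg _
    set w := Complex.exp ((θ/3 : ℝ) * Complex.I) with hw
    have hw0 : w ≠ 0 := Complex.exp_ne_zero _
    have habsw : ‖w‖ = 1 := Complex.norm_exp_ofReal_mul_I _
    have hw3 : w ^ 3 = u * v * s := by
      rw [hw, ← Complex.exp_nat_mul, ← hexp]
      congr 1
      push_cast
      ring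
    have hwre : w.re = Real.cos (θ/3) := by
      rw [hw]; exact Complex.exp_ofReal_mul_I_re _
    have hwim : w.im = Real.sin (θ/3) := by
      rw [hw]; exact Complex.exp_ofReal_mul_I_im _
    have hcos : 1/2 < Real.cos (θ/3) := by
      have h1 : |θ/3| < Real.pi/3 := by
        have h2 : |θ| < Real.pi := abs_lt.mpr ⟨hθgt, hθlt⟩
        have h3 : |θ/3| = |θ|/3 := by rw [abs_div]; norm_num
        rw [h3]
        linarith
      calc (1:ℝ)/2 = Real.cos (Real.pi/3) := (Real.cos_pi_div_three).symm
        _ < Real.cos |θ/3| := Real.cos_lt_cos_of_nonneg_of_le_pi (abs_nonneg _)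
            (by linarith [Real.pi_pos]) h1
        _ = Real.cos (θ/3) := Real.cos_abs _
    have hR : (‖1 - w‖)^2 = 2 - 2 * Real.cos (θ/3) := by
      rw [Complex.sq_norm, Complex.normSq_apply, Complex.sub_re, Complex.sub_im,
        Complex.one_re, Complex.one_im, hwre, hwim]
      nlinarith [Real.sin_sq_add_cos_sq (θ/3)]
    have hRlt : (‖1 - w‖)^2 < 1 := by rw [hR]; linarith
    set a : ℂ := 1 with ha
    set b : ℂ := u⁻¹ * w with hb
    set c : ℂ := (u * v)⁻¹ * w^2 with hc
    set f : Fin d → ℂ := fun x => if x = m then a else if x = k then b else if x = l then c else 0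
      with hfd
    have hf0 : f ≠ 0 := by
      intro h
      have h2 := congrFun h m
      simp [hfd, ha] at h2
    have hba : ‖b‖ = 1 := by rw [hb, norm_mul, norm_inv, hu, habsw]; norm_num
    have hca : ‖c‖ = 1 := by
      rw [hc, norm_mul, norm_inv, norm_mul, norm_pow, hu, hv, habsw]; norm_num
    have haa : ‖a‖ = 1 := by simp [ha]
    have hs3 : s = (u*v)⁻¹ * w^3 := by rw [hw3]; field_simp
    have t1 : a - σ m k * b = 1 - w := by
      rw [← hudef, ha, hb]; field_simp
    have t2 : a - σ m l * c = w⁻¹ * (-(1 - w)) := by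
      rw [hinv l m hlm, ← hsdef, ha, hc, hs3]
      field_simp
      ring
    have t3 : b - σ k m * a = u⁻¹ * (-(1 - w)) := by
      rw [hinv m k hmk, ← hudef, ha, hb]
      field_simp
      ring
    have t4 : b - σ k l * c = u⁻¹ * (w * (1 - w)) := by
      rw [← hvdef, hb, hc]
      field_simp
    have t5 : c - σ l m * a = (u*v)⁻¹ * (w^2 * (1 - w)) := by
      rw [← hsdef, ha, hc, hs3]
      ring
    have t6 : c - σ l k * b = (u*v)⁻¹ * (-(w * (1 - w))) := by
      rw [hinv k l hkl, ← hvdef, hb, hc]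
      field_simp
      ring
    have e1 : (‖a - σ m k * b‖)^2 = (‖1 - w‖)^2 := by rw [t1]
    have e2 : (‖a - σ m l * c‖)^2 = (‖1 - w‖)^2 := by
      rw [t2, norm_mul, norm_inv, habsw, norm_neg]; norm_num
    have e3 : (‖b - σ k m * a‖)^2 = (‖1 - w‖)^2 := by
      rw [t3, norm_mul, norm_inv, hu, norm_neg]; norm_num
    have e4 : (‖b - σ k l * c‖)^2 = (‖1 - w‖)^2 := by
      rw [t4, norm_mul, norm_inv, hu, norm_mul, habsw]; norm_num
    have e5 : (‖c - σ l m * a‖)^2 = (‖1 - w‖)^2 := by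
      rw [t5, norm_mul, norm_inv, norm_mul, hu, hv, norm_mul, norm_pow, habsw]; norm_num
    have e6 : (‖c - σ l k * b‖)^2 = (‖1 - w‖)^2 := by
      rw [t6, norm_mul, norm_inv, norm_mul, hu, hv, norm_neg, norm_mul, habsw]
      norm_num
    have hE := energy_three σ habs hmk hkl hlm a b c
    rw [e1, e2, e3, e4, e5, e6, haa, hba, hca] at hE
    have hD := denom_three hmk hkl hlm a b c
    rw [haa, hba, hca] at hD
    have hmem : magEnergy (⊤ : SimpleGraph (Fin d)) σ f / magDenom f ∈
        { r : ℝ | ∃ g : Fin d → ℂ, g ≠ 0 ∧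
          r = magEnergy (⊤ : SimpleGraph (Fin d)) σ g / magDenom g } := ⟨f, hf0, rfl⟩
    have hge : (d : ℝ) - 2 ≤ magEnergy (⊤ : SimpleGraph (Fin d)) σ f / magDenom f := by
      rw [← hmax]
      exact csInf_le hbdd hmem
    rw [← hfd] at hE hD
    rw [hE, hD] at hge
    have hd3 : ((d - 3 : ℕ) : ℝ) = (d : ℝ) - 3 := by
      rw [Nat.cast_sub hd]
      norm_num
    rw [hd3] at hge
    rw [le_div_iff₀ (by norm_num : (0:ℝ) < 1^2+1^2+1^2)] at hge
    set R := (‖1 - w‖) ^ 2 with hRdef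
    clear_value R
    linarith
  refine ⟨tri, ?_⟩
  have hd0 : 0 < d := by omega
  set p : Fin d := ⟨0, hd0⟩ with hp
  refine ⟨fun x => if x = p then (-1 : ℂ) else σ x p, ?_, ?_⟩
  · intro x
    by_cases h : x = p
    · simp [h]
    · simp only [if_neg h]
      exact habs x p h
  · intro x y hxy
    show (if x = p then (-1:ℂ) else σ x p)⁻¹ * σ x y * (if y = p then (-1:ℂ) else σ y p) = -1
    by_cases hx : x = p
    · have hy : ¬ y = p := fun h => hxy (by rw [hx, h])
      have hpy : p ≠ y := fun h => hxy (by rw [hx, ← h])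
      rw [if_pos hx, if_neg hy, hx, hinv p y hpy]
      have h0 : σ p y ≠ 0 := unit_ne_zero' (habs p y hpy)
      field_simp
    · by_cases hy : y = p
      · rw [if_neg hx, if_pos hy, hy]
        have hxp : x ≠ p := hx
        have h0 : σ x p ≠ 0 := unit_ne_zero' (habs x p hxp)
        field_simp
      · simp only [if_neg hx, if_neg hy]
        have hpy : p ≠ y := fun h => hy h.symm
        have h1 := tri x p y hx hpy hxy.symm
        have hxp0 : σ x p ≠ 0 := unit_ne_zero' (habs x p hx)
        have hpy0 : σ p y ≠ 0 := unit_ne_zero' (habs p y hpy)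
        have hxy0 : σ x y ≠ 0 := unit_ne_zero' (habs x y hxy)
        have h3 : σ y x = (σ x y)⁻¹ := hinv x y hxy
        rw [h3] at h1
        have h4 : σ y p = (σ p y)⁻¹ := hinv p y hpy
        rw [h4]
        have h2 : σ x y = -(σ x p * σ p y) := by
          field_simp at h1
          linear_combination h1
        rw [h2]
        field_simp
end

section
/- Let G = (V,E) be a connected finite graph and σ: E^{or}(G) → {±1} an unbalanced signature (not gauge/switching equivalent to the trivial one). Then λ₁^σ(G) ≥ 1 / ((diam(G)+1)·|V|). In particular ν(G) ≥ 1/((diam(G)+1)|V|). -/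
open Finset

variable {V : Type*} [Fintype V] {W : Type*} [Fintype W]

/-! ### Auxiliary material -/

/-- two-block Cauchy-Schwarz -/
lemma cs2 {A B a b P Q : ℝ} (hA : 0 ≤ A) (hB : 0 ≤ B) (ha : 0 ≤ a) (hb : 0 ≤ b)
    (hP : 0 ≤ P) (hQ : 0 ≤ Q) (h1 : A ^ 2 ≤ a * P) (h2 : B ^ 2 ≤ b * Q) :
    (A + B) ^ 2 ≤ (a + b) * (P + Q) := by
  have key : 2 * (A * B) ≤ a * Q + b * P := by
    nlinarith [sq_nonneg (A * B), sq_nonneg (a * Q - b * P), mul_le_mul h1 h2 (sq_nonneg B) (by positivity),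
      mul_nonneg ha hQ, mul_nonneg hb hP, sq_nonneg (A * B - 1)]
  nlinarith

omit [Fintype V] in
/-- parent existence towards x0 -/
lemma exists_parent {G : SimpleGraph V} (hconn : G.Connected) (x0 x : V) (hx : x ≠ x0) :
    ∃ y, G.Adj y x ∧ G.dist x0 y + 1 = G.dist x0 x := by
  obtain ⟨w, hw⟩ := hconn.exists_walk_length_eq_dist x0 x
  have hpos : 0 < G.dist x0 x := hconn.pos_dist_of_ne (Ne.symm hx)
  obtain ⟨u, hadj, hu⟩ : ∃ u, G.Adj u x ∧ G.dist x0 u + 1 ≤ G.dist x0 x := by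
    cases hwr : w.reverse with
    | nil =>
        exfalso
        have := congrArg SimpleGraph.Walk.length hwr
        rw [SimpleGraph.Walk.length_reverse] at this
        simp only [SimpleGraph.Walk.length_nil] at this
        omega
    | cons h q =>
        refine ⟨_, h.symm, ?_⟩
        have hlen := congrArg SimpleGraph.Walk.length hwr
        rw [SimpleGraph.Walk.length_reverse] at hlen
        simp only [SimpleGraph.Walk.length_cons] at hlen
        have hd : G.dist x0 _ ≤ q.reverse.length := SimpleGraph.dist_le q.reverse
        rw [SimpleGraph.Walk.length_reverse] at hd
        omega
  refine ⟨u, hadj, ?_⟩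
  have h2 : G.dist x0 x ≤ G.dist x0 u + 1 := by
    calc G.dist x0 x ≤ G.dist x0 u + G.dist u x := hconn.dist_triangle
    _ ≤ G.dist x0 u + 1 := by
        have h1 : G.dist u x ≤ (SimpleGraph.Adj.toWalk hadj).length := SimpleGraph.dist_le _
        simp only [SimpleGraph.Walk.length_cons, SimpleGraph.Walk.length_nil] at h1
        omega
  omega

open scoped Classical in
noncomputable def fuelProd {V : Type*} (σ : V → V → ℂ) (p : V → V) (x0 : V) : ℕ → V → ℂ
  | 0, _ => 1
  | n+1, x => if x = x0 then 1 else fuelProd σ p x0 n (p x) * σ (p x) x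

open scoped Classical in
noncomputable def fuelSum {V : Type*} (t : V → V → ℝ) (p : V → V) (x0 : V) : ℕ → V → ℝ
  | 0, _ => 0
  | n+1, x => if x = x0 then 0 else fuelSum t p x0 n (p x) + t (p x) x

set_option maxHeartbeats 2000000 in
/-- The key inequality. -/
lemma key_ineq (G : SimpleGraph V) (hconn : G.Connected) (σ : V → V → ℂ)
    (hσ : IsMagPotential G σ)
    (hsign : ∀ x y, G.Adj x y → σ x y = 1 ∨ σ x y = -1)
    (hunbal : ¬ ∃ τ : V → ℂ, (∀ x, τ x = 1 ∨ τ x = -1) ∧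
        ∀ x y, G.Adj x y → (τ x)⁻¹ * σ x y * τ y = 1) (f : V → ℂ) :
    magDenom f ≤ ((G.diam : ℝ) + 1) * (Fintype.card V : ℝ) * magEnergy G σ f := by
  classical
  have hne : Nonempty V := hconn.nonempty
  -- basic sign facts
  have hσsq : ∀ x y, G.Adj x y → σ x y * σ x y = 1 := by
    intro x y h; rcases hsign x y h with h' | h' <;> rw [h'] <;> norm_num
  have hσsymm : ∀ x y, G.Adj x y → σ y x = σ x y := by
    intro x y h
    rw [hσ.2 x y h]
    rcases hsign x y h with h' | h' <;> rw [h'] <;> norm_num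
  -- maximizing vertex
  obtain ⟨x0, -, hmax⟩ := Finset.exists_max_image (univ : Finset V)
    (fun x => ‖f x‖) ⟨Classical.arbitrary V, mem_univ _⟩
  set m : ℝ := ‖f x0‖ with hm
  -- parent function
  have hpar : ∀ x : V, ∃ y, x ≠ x0 → G.Adj y x ∧ G.dist x0 y + 1 = G.dist x0 x := by
    intro x
    by_cases hx : x = x0
    · exact ⟨x, fun h => absurd hx h⟩
    · obtain ⟨y, h1, h2⟩ := exists_parent hconn x0 x hx
      exact ⟨y, fun _ => ⟨h1, h2⟩⟩
  choose p hp using hpar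
  have hdist0 : G.dist x0 x0 = 0 := SimpleGraph.dist_self
  have hdpos : ∀ x, x ≠ x0 → 0 < G.dist x0 x := fun x hx => hconn.pos_dist_of_ne (Ne.symm hx)
  -- sign function
  set s : V → ℂ := fun x => fuelProd σ p x0 (G.dist x0 x) x with hs
  have hs0 : s x0 = 1 := by
    simp only [hs, hdist0]
    rfl
  have hs_rec : ∀ x, x ≠ x0 → s x = s (p x) * σ (p x) x := by
    intro x hx
    have hd := (hp x hx).2
    simp only [hs]
    rw [← hd]
    simp [fuelProd, hx]
  have hs_pm : ∀ x, s x = 1 ∨ s x = -1 := by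
    suffices h : ∀ n (x : V), G.dist x0 x ≤ n → (s x = 1 ∨ s x = -1) from
      fun x => h (G.dist x0 x) x le_rfl
    intro n
    induction n with
    | zero =>
        intro x hx
        have hxx : x = x0 := by
          by_contra h
          have := hdpos x h
          omega
        subst hxx
        left; exact hs0
    | succ n ih =>
        intro x hx
        by_cases h : x = x0
        · subst h; left; exact hs0
        · rw [hs_rec x h]
          have h1 := ih (p x) (by have := (hp x h).2; omega)
          have h2 := hsign _ _ (hp x h).1
          rcases h1 with h1 | h1 <;> rcases h2 with h2 | h2 <;> rw [h1, h2] <;> norm_num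
  have hs_sq : ∀ x, s x * s x = 1 := by
    intro x; rcases hs_pm x with h | h <;> rw [h] <;> norm_num
  have hs_abs : ∀ x, ‖s x‖ = 1 := by
    intro x; rcases hs_pm x with h | h <;> rw [h] <;> simp
  -- frustrated edge
  obtain ⟨a, b, hab, hfr⟩ : ∃ a b, G.Adj a b ∧ s a * σ a b * s b = -1 := by
    by_contra hcon
    push_neg at hcon
    apply hunbal
    refine ⟨s, hs_pm, fun x y hxy => ?_⟩
    have h1 := hs_pm x
    have h2 := hs_pm y
    have h3 := hsign x y hxy
    have h4 := hcon x y hxy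
    rcases h1 with h1 | h1 <;> rcases h2 with h2 | h2 <;> rcases h3 with h3 | h3 <;>
      (revert h4; norm_num [h1, h2, h3])
  have hσab : σ a b = -(s a * s b) := by
    have h1 := hs_sq a
    have h2 := hs_sq b
    linear_combination (s a * s b) * hfr - (σ a b * s b * s b) * h1 - σ a b * h2
  -- frustrated edge is not a tree edge
  have htree_b : b ≠ x0 → p b ≠ a := by
    intro hb hpb
    have := hs_rec b hb
    rw [hpb] at this
    rw [this] at hfr
    have h1 := hs_sq a
    have h2 := hσsq a b hab
    have : (1 : ℂ) = -1 := by linear_combination hfr - (σ a b * σ a b) * h1 - h2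
    norm_num at this
  have htree_a : a ≠ x0 → p a ≠ b := by
    intro ha hpa
    have h0 := hs_rec a ha
    rw [hpa, hσsymm a b hab] at h0
    rw [h0] at hfr
    have h1 := hs_sq b
    have h2 := hσsq a b hab
    have : (1 : ℂ) = -1 := by linear_combination hfr - (σ a b * σ a b) * h1 - h2
    norm_num at this
  -- edge weights
  set t : V → V → ℝ := fun x y => ‖f x - σ x y * f y‖ with htdef
  have ht_nonneg : ∀ x y, 0 ≤ t x y := fun x y => norm_nonneg _
  have ht_symm : ∀ x y, G.Adj x y → t y x = t x y := by
    intro x y h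
    have hsq := hσsq x y h
    have heq : f y - σ y x * f x = -σ y x * (f x - σ x y * f y) := by
      rw [hσsymm x y h]
      linear_combination (-(f y)) * hsq
    simp only [htdef]
    rw [heq, norm_mul, norm_neg, hσ.1 y x h.symm, one_mul]
  set T : V → ℝ := fun x => fuelSum t p x0 (G.dist x0 x) x with hT
  set Q : V → ℝ := fun x => fuelSum (fun u v => t u v ^ 2) p x0 (G.dist x0 x) x with hQ
  have hT0 : T x0 = 0 := by simp only [hT, hdist0]; rfl
  have hQ0 : Q x0 = 0 := by simp only [hQ, hdist0]; rfl
  have hT_rec : ∀ x, x ≠ x0 → T x = T (p x) + t (p x) x := by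
    intro x hx
    have hd := (hp x hx).2
    simp only [hT]
    rw [← hd]
    simp [fuelSum, hx]
  have hQ_rec : ∀ x, x ≠ x0 → Q x = Q (p x) + t (p x) x ^ 2 := by
    intro x hx
    have hd := (hp x hx).2
    simp only [hQ]
    rw [← hd]
    simp [fuelSum, hx]
  -- nonnegativity, telescoping, Cauchy-Schwarz along paths : joint induction
  have hmain_ind : ∀ n (x : V), G.dist x0 x ≤ n →
      (0 ≤ T x ∧ 0 ≤ Q x ∧ ‖f x0 - s x * f x‖ ≤ T x ∧
        T x ^ 2 ≤ (G.dist x0 x : ℝ) * Q x) := by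
    intro n
    induction n with
    | zero =>
        intro x hx
        have hxx : x = x0 := by
          by_contra h; have := hdpos x h; omega
        subst hxx
        refine ⟨le_of_eq hT0.symm, le_of_eq hQ0.symm, ?_, ?_⟩
        · rw [hs0, hT0, one_mul, sub_self]
          simp
        · rw [hT0, hdist0]
          norm_num
    | succ n ih =>
        intro x hx
        by_cases h : x = x0
        · subst h
          refine ⟨le_of_eq hT0.symm, le_of_eq hQ0.symm, ?_, ?_⟩
          · rw [hs0, hT0, one_mul, sub_self]; simp
          · rw [hT0, hdist0]; norm_num
        · have hd := (hp x h).2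
          obtain ⟨ihT, ihQ, ihtel, ihcs⟩ := ih (p x) (by omega)
          have hTx := hT_rec x h
          have hQx := hQ_rec x h
          have htn := ht_nonneg (p x) x
          refine ⟨by rw [hTx]; positivity, by rw [hQx]; positivity, ?_, ?_⟩
          · -- telescoping
            have step : ‖s (p x) * f (p x) - s x * f x‖ = t (p x) x := by
              have hrec := hs_rec x h
              have heq : s (p x) * f (p x) - s x * f x
                  = s (p x) * (f (p x) - σ (p x) x * f x) := by
                rw [hrec]; ring
              rw [heq, norm_mul, hs_abs, one_mul]
            calc ‖f x0 - s x * f x‖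
                ≤ ‖f x0 - s (p x) * f (p x)‖
                  + ‖s (p x) * f (p x) - s x * f x‖ := by
                  have := norm_sub_le_norm_sub_add_norm_sub (f x0) (s (p x) * f (p x)) (s x * f x)
                  exact this
              _ ≤ T (p x) + t (p x) x := by rw [step]; exact add_le_add_left ihtel _
              _ = T x := hTx.symm
          · -- Cauchy-Schwarz
            rw [hTx, hQx]
            have : ((G.dist x0 x : ℝ)) = (G.dist x0 (p x) : ℝ) + 1 := by
              exact_mod_cast (by omega : G.dist x0 x = G.dist x0 (p x) + 1)
            rw [this]
            exact cs2 ihT htn (by positivity) zero_le_one ihQ (by positivity) ihcs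
              (by nlinarith [sq_nonneg (t (p x) x)])
  have hT_nonneg : ∀ x, 0 ≤ T x := fun x => (hmain_ind _ x le_rfl).1
  have hQ_nonneg : ∀ x, 0 ≤ Q x := fun x => (hmain_ind _ x le_rfl).2.1
  have htel : ∀ x, ‖f x0 - s x * f x‖ ≤ T x := fun x => (hmain_ind _ x le_rfl).2.2.1
  have hTQ : ∀ x, T x ^ 2 ≤ (G.dist x0 x : ℝ) * Q x := fun x => (hmain_ind _ x le_rfl).2.2.2
  -- global edge weight function
  set g : V → ℝ := fun y => if y = x0 then 0 else t (p y) y ^ 2 with hg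
  have hg_nonneg : ∀ y, 0 ≤ g y := by
    intro y; simp only [hg]; split <;> positivity
  set S : ℝ := ∑ y : V, g y with hS
  -- Q is bounded by S
  have hQS : ∀ x, Q x ≤ S := by
    have key : ∀ n (x : V), G.dist x0 x ≤ n →
        Q x ≤ ∑ y ∈ univ.filter (fun y => y ≠ x0 ∧ G.dist x0 y ≤ G.dist x0 x), g y := by
      intro n
      induction n with
      | zero =>
          intro x hx
          have hxx : x = x0 := by by_contra h; have := hdpos x h; omega
          subst hxx
          rw [hQ0]
          exact Finset.sum_nonneg fun y _ => hg_nonneg y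
      | succ n ih =>
          intro x hx
          by_cases h : x = x0
          · subst h; rw [hQ0]; exact Finset.sum_nonneg fun y _ => hg_nonneg y
          · have hd := (hp x h).2
            have ihx := ih (p x) (by omega)
            have hxnot : x ∉ univ.filter (fun y => y ≠ x0 ∧ G.dist x0 y ≤ G.dist x0 (p x)) := by
              simp only [mem_filter, mem_univ, true_and, not_and]
              intro _
              omega
            have hgx : g x = t (p x) x ^ 2 := by simp only [hg, if_neg h]
            calc Q x = Q (p x) + t (p x) x ^ 2 := hQ_rec x h
              _ ≤ (∑ y ∈ univ.filter (fun y => y ≠ x0 ∧ G.dist x0 y ≤ G.dist x0 (p x)), g y)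
                  + g x := by rw [hgx]; exact add_le_add_left ihx _
              _ = ∑ y ∈ insert x (univ.filter (fun y => y ≠ x0 ∧ G.dist x0 y ≤ G.dist x0 (p x))),
                    g y := by rw [Finset.sum_insert hxnot, add_comm]
              _ ≤ ∑ y ∈ univ.filter (fun y => y ≠ x0 ∧ G.dist x0 y ≤ G.dist x0 x), g y := by
                  apply Finset.sum_le_sum_of_subset_of_nonneg
                  · intro y hy
                    rcases Finset.mem_insert.mp hy with rfl | hy
                    · simp only [mem_filter, mem_univ, true_and]
                      exact ⟨h, le_rfl⟩
                    · simp only [mem_filter, mem_univ, true_and] at hy ⊢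
                      exact ⟨hy.1, by omega⟩
                  · intro y _ _; exact hg_nonneg y
    intro x
    calc Q x ≤ ∑ y ∈ univ.filter (fun y => y ≠ x0 ∧ G.dist x0 y ≤ G.dist x0 x), g y :=
          key _ x le_rfl
      _ ≤ S := Finset.sum_le_sum_of_subset_of_nonneg (Finset.filter_subset _ _)
          (fun y _ _ => hg_nonneg y)
  -- pointwise row inequality
  set e : V → V → ℝ := fun x y => if G.Adj x y then t x y ^ 2 else 0 with he
  have he_nonneg : ∀ x y, 0 ≤ e x y := by
    intro x y; simp only [he]; split <;> positivity
  have heab : e a b = t a b ^ 2 := by simp only [he, if_pos hab]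
  have claim5 : ∀ y : V,
      g y + (∑ c ∈ univ.filter (fun c => c ≠ x0 ∧ p c = y), g c)
        + (if y = b then t a b ^ 2 else 0) ≤ ∑ x : V, e x y := by
    intro y
    have hCsum : ∑ c ∈ univ.filter (fun c => c ≠ x0 ∧ p c = y), g c
        = ∑ c ∈ univ.filter (fun c => c ≠ x0 ∧ p c = y), e c y := by
      apply Finset.sum_congr rfl
      intro c hc
      simp only [mem_filter, mem_univ, true_and] at hc
      obtain ⟨hc1, hc2⟩ := hc
      have hadj : G.Adj y c := by rw [← hc2]; exact (hp c hc1).1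
      have hgc : g c = t c y ^ 2 := by
        simp only [hg, if_neg hc1, hc2]
        rw [ht_symm y c hadj]
      rw [hgc]
      simp only [he, if_pos hadj.symm]
    have hsub : ∀ (F : Finset V), ∑ c ∈ F, e c y ≤ ∑ x : V, e x y := by
      intro F
      exact Finset.sum_le_sum_of_subset_of_nonneg (Finset.subset_univ F)
        (fun x _ _ => he_nonneg x y)
    have hpyC : y ≠ x0 → p y ∉ univ.filter (fun c => c ≠ x0 ∧ p c = y) := by
      intro hy hmem
      simp only [mem_filter, mem_univ, true_and] at hmem
      obtain ⟨h1, h2⟩ := hmem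
      have d1 := (hp y hy).2
      have d2 := (hp (p y) h1).2
      rw [h2] at d2
      omega
    have hepy : y ≠ x0 → e (p y) y = g y := by
      intro hy
      simp only [he, if_pos (hp y hy).1, hg, if_neg hy]
    by_cases hyb : y = b
    · subst hyb
      have haC : a ∉ univ.filter (fun c => c ≠ x0 ∧ p c = y) := by
        simp only [mem_filter, mem_univ, true_and, not_and]
        intro ha hpa
        exact htree_a ha hpa
      rw [if_pos rfl, hCsum]
      by_cases hy : y = x0
      · have hgy : g y = 0 := by simp [hg, hy]
        rw [hgy, zero_add]
        calc (∑ c ∈ univ.filter (fun c => c ≠ x0 ∧ p c = y), e c y) + t a y ^ 2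
            = ∑ c ∈ insert a (univ.filter (fun c => c ≠ x0 ∧ p c = y)), e c y := by
              rw [Finset.sum_insert haC, heab]; ring
          _ ≤ ∑ x : V, e x y := hsub _
      · have hpbia : p y ∉ insert a (univ.filter (fun c => c ≠ x0 ∧ p c = y)) := by
          rw [Finset.mem_insert]
          push_neg
          exact ⟨htree_b hy, hpyC hy⟩
        calc g y + (∑ c ∈ univ.filter (fun c => c ≠ x0 ∧ p c = y), e c y) + t a y ^ 2
            = ∑ c ∈ insert (p y) (insert a (univ.filter (fun c => c ≠ x0 ∧ p c = y))), e c y := by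
              rw [Finset.sum_insert hpbia, Finset.sum_insert haC, heab, hepy hy]; ring
          _ ≤ ∑ x : V, e x y := hsub _
    · rw [if_neg hyb, add_zero, hCsum]
      by_cases hy : y = x0
      · have hgy : g y = 0 := by simp [hg, hy]
        rw [hgy, zero_add]
        exact hsub _
      · calc g y + ∑ c ∈ univ.filter (fun c => c ≠ x0 ∧ p c = y), e c y
            = ∑ c ∈ insert (p y) (univ.filter (fun c => c ≠ x0 ∧ p c = y)), e c y := by
              rw [Finset.sum_insert (hpyC hy), hepy hy]
          _ ≤ ∑ x : V, e x y := hsub _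
  -- sum the row inequality
  have hsum5 : S + S + t a b ^ 2 ≤ ∑ y : V, ∑ x : V, e x y := by
    have h1 := Finset.sum_le_sum (fun y (_ : y ∈ (univ : Finset V)) => claim5 y)
    rw [Finset.sum_add_distrib, Finset.sum_add_distrib] at h1
    have h2 : ∑ y : V, ∑ c ∈ univ.filter (fun c => c ≠ x0 ∧ p c = y), g c = S := by
      simp_rw [Finset.sum_filter]
      rw [Finset.sum_comm, hS]
      apply Finset.sum_congr rfl
      intro c _
      by_cases hc : c = x0
      · simp [hc, hg]
      · simp [hc]
    have h3 : ∑ y : V, (if y = b then t a b ^ 2 else 0) = t a b ^ 2 := by simp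
    rw [h2, h3, ← hS] at h1
    exact h1
  have h2E : ∑ y : V, ∑ x : V, e x y = 2 * magEnergy G σ f := by
    rw [magEnergy, Finset.sum_comm]
    simp only [he, htdef]
    ring
  -- assemble the main estimate
  have habs2 : ‖2 * f x0‖ = 2 * m := by
    rw [norm_mul, Complex.norm_two, hm]
  have hmid : ‖s a * f a + s b * f b‖ = t a b := by
    have heq : s a * f a + s b * f b = s a * (f a - σ a b * f b) := by
      linear_combination (s a * f b) * hσab + (-(s b * f b)) * hs_sq a
    rw [heq, norm_mul, hs_abs, one_mul]
  have htri : 2 * m ≤ T a + (t a b + T b) := by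
    rw [← habs2]
    have hdecomp : (2 : ℂ) * f x0
        = (f x0 - s a * f a) + ((s a * f a + s b * f b) + (f x0 - s b * f b)) := by ring
    calc ‖2 * f x0‖
        ≤ ‖f x0 - s a * f a‖
          + ‖(s a * f a + s b * f b) + (f x0 - s b * f b)‖ := by
          rw [hdecomp]; exact norm_add_le _ _
      _ ≤ ‖f x0 - s a * f a‖
          + (‖s a * f a + s b * f b‖ + ‖f x0 - s b * f b‖) := by
          have := norm_add_le (s a * f a + s b * f b) (f x0 - s b * f b)
          linarith
      _ ≤ T a + (t a b + T b) := by
          rw [hmid]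
          have h1 := htel a
          have h2 := htel b
          linarith
  have hm_nonneg : 0 ≤ m := norm_nonneg _
  have hsq2 : (2 * m) ^ 2
      ≤ ((G.dist x0 a : ℝ) + (1 + (G.dist x0 b : ℝ))) * (Q a + (t a b ^ 2 + Q b)) := by
    calc (2 * m) ^ 2 ≤ (T a + (t a b + T b)) ^ 2 :=
          pow_le_pow_left₀ (by positivity) htri 2
      _ ≤ _ := by
          apply cs2 (hT_nonneg a) (add_nonneg (ht_nonneg a b) (hT_nonneg b))
            (Nat.cast_nonneg _) (by positivity) (hQ_nonneg a)
            (add_nonneg (sq_nonneg _) (hQ_nonneg b)) (hTQ a)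
          apply cs2 (ht_nonneg a b) (hT_nonneg b) zero_le_one (Nat.cast_nonneg _)
            (sq_nonneg _) (hQ_nonneg b) (le_of_eq (one_mul _).symm) (hTQ b)
  have hediam : G.ediam ≠ ⊤ := by
    obtain ⟨u, v, huv⟩ := SimpleGraph.exists_edist_eq_ediam_of_finite (G := G)
    rw [← huv]
    exact SimpleGraph.edist_ne_top_iff_reachable.mpr (hconn u v)
  have hda : (G.dist x0 a : ℝ) ≤ (G.diam : ℝ) :=
    Nat.cast_le.mpr (SimpleGraph.dist_le_diam hediam)
  have hdb : (G.dist x0 b : ℝ) ≤ (G.diam : ℝ) :=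
    Nat.cast_le.mpr (SimpleGraph.dist_le_diam hediam)
  have hE_nonneg : 0 ≤ magEnergy G σ f := by
    rw [magEnergy]
    apply mul_nonneg (by norm_num)
    apply Finset.sum_nonneg
    intro x _
    apply Finset.sum_nonneg
    intro y _
    split <;> positivity
  have hQab : Q a + (t a b ^ 2 + Q b) ≤ 2 * magEnergy G σ f := by
    have hqa := hQS a
    have hqb := hQS b
    rw [h2E] at hsum5
    linarith
  have hfinal : 4 * m ^ 2 ≤ (2 * (G.diam : ℝ) + 1) * (2 * magEnergy G σ f) := by
    calc 4 * m ^ 2 = (2 * m) ^ 2 := by ring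
      _ ≤ ((G.dist x0 a : ℝ) + (1 + (G.dist x0 b : ℝ))) * (Q a + (t a b ^ 2 + Q b)) := hsq2
      _ ≤ (2 * (G.diam : ℝ) + 1) * (2 * magEnergy G σ f) := by
          apply mul_le_mul (by linarith) hQab
          · have := hQ_nonneg a
            have := hQ_nonneg b
            have := sq_nonneg (t a b)
            positivity
          · positivity
  have hD : magDenom f ≤ (Fintype.card V : ℝ) * m ^ 2 := by
    rw [magDenom]
    calc ∑ x : V, ‖f x‖ ^ 2 ≤ ∑ _x : V, m ^ 2 :=
          Finset.sum_le_sum (fun x _ => by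
            have h1 := hmax x (mem_univ x)
            have h2 := norm_nonneg (f x)
            nlinarith)
      _ = (Fintype.card V : ℝ) * m ^ 2 := by
          rw [Finset.sum_const, card_univ, nsmul_eq_mul]
  have hn0 : (0 : ℝ) ≤ (Fintype.card V : ℝ) := Nat.cast_nonneg _
  have hd0 : (0 : ℝ) ≤ (G.diam : ℝ) := Nat.cast_nonneg _
  nlinarith [mul_le_mul_of_nonneg_left hfinal hn0, mul_nonneg hn0 hE_nonneg,
    mul_nonneg (mul_nonneg hd0 hn0) hE_nonneg, sq_nonneg m, hD]


theorem unbalanced_signature_lambda1_lower_bound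
    (G : SimpleGraph V) (hconn : G.Connected) (σ : V → V → ℂ)
    (hσ : IsMagPotential G σ)
    (hsign : ∀ x y, G.Adj x y → σ x y = 1 ∨ σ x y = -1)
    (hunbal : ¬ ∃ τ : V → ℂ, (∀ x, τ x = 1 ∨ τ x = -1) ∧
        ∀ x y, G.Adj x y → (τ x)⁻¹ * σ x y * τ y = 1) :
    (1 : ℝ) / (((G.diam : ℝ) + 1) * Fintype.card V) ≤ lambda1 G σ ∧
    (1 : ℝ) / (((G.diam : ℝ) + 1) * Fintype.card V) ≤ magHeight G := by
  classical
  have hne : Nonempty V := hconn.nonempty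
  have hn_pos : 0 < (Fintype.card V : ℝ) := by exact_mod_cast Fintype.card_pos
  have hd0 : (0 : ℝ) ≤ (G.diam : ℝ) := Nat.cast_nonneg _
  have hden_pos : 0 < ((G.diam : ℝ) + 1) * (Fintype.card V : ℝ) := by positivity
  have hone : (fun _ : V => (1 : ℂ)) ≠ 0 := by
    intro h
    have h2 := congrFun h (Classical.arbitrary V)
    simp only [Pi.zero_apply, one_ne_zero] at h2
  have hpart1 : (1 : ℝ) / (((G.diam : ℝ) + 1) * Fintype.card V) ≤ lambda1 G σ := by
    rw [lambda1]
    apply le_csInf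
    · exact ⟨_, (fun _ => (1 : ℂ)), hone, rfl⟩
    · rintro r ⟨f, hf, rfl⟩
      have hD_pos : 0 < magDenom f := by
        obtain ⟨x, hx⟩ : ∃ x, f x ≠ 0 := by
          by_contra h
          push_neg at h
          exact hf (funext h)
        have h1 : 0 < ‖f x‖ ^ 2 := by
          have := norm_pos_iff.mpr hx
          positivity
        rw [magDenom]
        exact Finset.sum_pos' (fun y _ => by positivity) ⟨x, mem_univ x, h1⟩
      have hkey := key_ineq G hconn σ hσ hsign hunbal f
      rw [div_le_div_iff₀ hden_pos hD_pos]
      nlinarith [hkey]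
  refine ⟨hpart1, le_trans hpart1 ?_⟩
  rw [magHeight]
  apply le_csSup
  · refine ⟨2 * (Fintype.card V : ℝ), ?_⟩
    rintro r ⟨σ', hσ', rfl⟩
    rw [lambda1]
    have hmem : magEnergy G σ' (fun _ => (1 : ℂ)) / magDenom (fun _ : V => (1 : ℂ)) ∈
        {r : ℝ | ∃ f : V → ℂ, f ≠ 0 ∧ r = magEnergy G σ' f / magDenom f} :=
      ⟨(fun _ => (1 : ℂ)), hone, rfl⟩
    have hbdd : ∀ r ∈ {r : ℝ | ∃ f : V → ℂ, f ≠ 0 ∧ r = magEnergy G σ' f / magDenom f},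
        (0 : ℝ) ≤ r := by
      rintro r ⟨f, hf, rfl⟩
      exact div_nonneg (magEnergy_nonneg G σ' f) (magDenom_nonneg f)
    have h1 := csInf_le ⟨0, fun r hr => hbdd r hr⟩ hmem
    refine le_trans h1 ?_
    have hDone : magDenom (fun _ : V => (1 : ℂ)) = (Fintype.card V : ℝ) := by
      rw [magDenom]
      simp [Finset.sum_const, card_univ]
    have hEone : magEnergy G σ' (fun _ => (1 : ℂ)) ≤ 2 * (Fintype.card V : ℝ) ^ 2 := by
      rw [magEnergy]
      have hterm : ∀ x y : V,
          (if G.Adj x y then ‖(1 : ℂ) - σ' x y * 1‖ ^ 2 else 0) ≤ 4 := by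
        intro x y
        split
        · rename_i hadj
          have h2 : ‖1 - σ' x y * 1‖ ≤ 2 := by
            rw [mul_one, sub_eq_add_neg]
            calc ‖1 + -σ' x y‖
                ≤ ‖(1 : ℂ)‖ + ‖-σ' x y‖ := norm_add_le _ _
              _ = 2 := by rw [norm_neg, hσ'.1 x y hadj, norm_one]; norm_num
          have h3 := norm_nonneg (1 - σ' x y * 1)
          nlinarith
        · norm_num
      calc (1/2 : ℝ) * ∑ x : V, ∑ y : V,
            (if G.Adj x y then ‖(1 : ℂ) - σ' x y * 1‖ ^ 2 else 0)
          ≤ (1/2 : ℝ) * ∑ _x : V, ∑ _y : V, (4 : ℝ) := by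
            apply mul_le_mul_of_nonneg_left _ (by norm_num)
            apply Finset.sum_le_sum
            intro x _
            exact Finset.sum_le_sum (fun y _ => hterm x y)
        _ = 2 * (Fintype.card V : ℝ) ^ 2 := by
            simp [Finset.sum_const, card_univ]
            ring
    rw [hDone, div_le_iff₀ hn_pos]
    nlinarith [hEone]
  · exact ⟨σ, hσ, rfl⟩
end
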